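/- arXiv:2109.13594 — 4 statements merged into one kernel-verified Lean document; each statement's English description precedes it below -/
import Mathlib

section
/- Failure of Gleason's theorem for unentangled multiqubit projections (Wallach's result recovered as a corollary): for every n ≥ 1 there exists a function f, defined on the set of product unit vectors of (ℂ²)^{⊗n} and depending only on rays, with values in {0,1}, such that Σ_{ψ ∈ B} f(ψ) = 1 for every orthonormal basis B of (ℂ²)^{⊗n} consisting of product vectors, and yet there is no positive semidefinite operator ρ on (ℂ²)^{⊗n} with trace 1 satisfying f(ψ) = ⟨ψ, ρψ⟩ for all product unit vectors ψ. -/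
open scoped InnerProductSpace
open MeasureTheory

noncomputable section

abbrev Qubit : Type := EuclideanSpace ℂ (Fin 2)
abbrev NQubit (n : ℕ) : Type := EuclideanSpace ℂ (Fin n → Fin 2)

/-- The product vector `ψ₁ ⊗ ⋯ ⊗ ψₙ` in `(ℂ²)^{⊗n}`, modelled concretely as
`EuclideanSpace ℂ (Fin n → Fin 2)`; its inner products satisfy
`⟨tens ψ, tens χ⟩ = ∏ j, ⟨ψ j, χ j⟩`. -/
noncomputable def tens {n : ℕ} (ψ : Fin n → Qubit) : NQubit n :=
  WithLp.toLp 2 (fun f => ∏ j, ψ j (f j))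

/-- A vector of `(ℂ²)^{⊗n}` is a product vector if it is of the form `ψ₁ ⊗ ⋯ ⊗ ψₙ`. -/
def IsProduct {n : ℕ} (v : NQubit n) : Prop := ∃ ψ : Fin n → Qubit, v = tens ψ

/-- A finite set of vectors forming an orthonormal basis of `H`. -/
def IsONBasis {H : Type*} [NormedAddCommGroup H] [InnerProductSpace ℂ H]
    (B : Finset H) : Prop :=
  Orthonormal ℂ (fun v : B => (v : H)) ∧ Submodule.span ℂ (B : Set H) = ⊤

/-- A KS-colouring of a set `S` of unit vectors: a `{0,1}`-valued map (modelled as a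
predicate, `c v` meaning value `1`) such that every orthonormal basis contained in `S`
has exactly one element of value `1`, and no two mutually orthogonal elements of `S`
both have value `1`. -/
def IsKSColouring {H : Type*} [NormedAddCommGroup H] [InnerProductSpace ℂ H]
    (S : Set H) (c : H → Prop) : Prop :=
  (∀ B : Finset H, ↑B ⊆ S → IsONBasis B → ∃! v, v ∈ B ∧ c v) ∧
  (∀ ψ ∈ S, ∀ χ ∈ S, ⟪ψ, χ⟫_ℂ = 0 → ¬(c ψ ∧ c χ))

set_option linter.unusedSectionVars false

namespace UGT

open Finset

noncomputable def perpQ (ψ : Qubit) : Qubit :=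
  WithLp.toLp 2 (fun i => if i = 0 then -(starRingEnd ℂ) (ψ 1) else (starRingEnd ℂ) (ψ 0))

@[simp] lemma perpQ_zero (ψ : Qubit) : perpQ ψ 0 = -(starRingEnd ℂ) (ψ 1) := rfl
@[simp] lemma perpQ_one (ψ : Qubit) : perpQ ψ 1 = (starRingEnd ℂ) (ψ 0) := rfl

lemma qubit_ext {ψ χ : Qubit} (h0 : ψ 0 = χ 0) (h1 : ψ 1 = χ 1) : ψ = χ := by
  refine PiLp.ext fun i => ?_
  fin_cases i <;> assumption

lemma perpQ_smul (c : ℂ) (ψ : Qubit) : perpQ (c • ψ) = (starRingEnd ℂ) c • perpQ ψ := by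
  refine qubit_ext ?_ ?_ <;>
    simp [perpQ, PiLp.smul_apply, smul_eq_mul, map_mul]

lemma perpQ_perpQ (ψ : Qubit) : perpQ (perpQ ψ) = -ψ := by
  refine qubit_ext ?_ ?_ <;> simp [perpQ]

lemma inner_perpQ_self (ψ : Qubit) : ⟪ψ, perpQ ψ⟫_ℂ = 0 := by
  simp [PiLp.inner_apply, RCLike.inner_apply, Fin.sum_univ_two]
  ring

lemma inner_self_perpQ (ψ : Qubit) : ⟪perpQ ψ, ψ⟫_ℂ = 0 := by
  rw [← inner_conj_symm, inner_perpQ_self, map_zero]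

lemma inner_perpQ_perpQ (ψ : Qubit) : ⟪perpQ ψ, perpQ ψ⟫_ℂ = ⟪ψ, ψ⟫_ℂ := by
  rw [PiLp.inner_apply, PiLp.inner_apply]
  simp [ RCLike.inner_apply, Fin.sum_univ_two]
  ring

lemma norm_one_of_inner_self {H : Type*} [NormedAddCommGroup H] [InnerProductSpace ℂ H]
    {v : H} (h : ⟪v, v⟫_ℂ = 1) : ‖v‖ = 1 := by
  have h2 : (‖v‖ : ℝ) ^ 2 = 1 := by
    have := inner_self_eq_norm_sq (𝕜 := ℂ) v
    rw [h] at this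
    simpa using this.symm
  nlinarith [norm_nonneg v]

lemma norm_perpQ (ψ : Qubit) (h : ‖ψ‖ = 1) : ‖perpQ ψ‖ = 1 := by
  refine norm_one_of_inner_self ?_
  rw [inner_perpQ_perpQ, inner_self_eq_norm_sq_to_K, h]
  norm_num

lemma perpQ_zero_vec : perpQ (0 : Qubit) = 0 := by
  refine qubit_ext ?_ ?_ <;> simp [perpQ]

lemma perpQ_ne_zero {ψ : Qubit} (h : ψ ≠ 0) : perpQ ψ ≠ 0 := by
  intro h0
  apply h
  have h2 := congrArg perpQ h0
  rw [perpQ_perpQ, perpQ_zero_vec] at h2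
  simpa [neg_eq_zero] using h2

lemma exists_index_ne_zero {ψ : Qubit} (h : ψ ≠ 0) : ∃ i, ψ i ≠ 0 := by
  by_contra hc
  push_neg at hc
  exact h (qubit_ext (hc 0) (hc 1))

lemma orth_eq_smul_perpQ {ψ χ : Qubit} (hψ : ψ ≠ 0) (h : ⟪ψ, χ⟫_ℂ = 0) :
    ∃ t : ℂ, χ = t • perpQ ψ := by
  have hinner : (starRingEnd ℂ) (ψ 0) * χ 0 + (starRingEnd ℂ) (ψ 1) * χ 1 = 0 := by
    have h' := h
    simp [PiLp.inner_apply, RCLike.inner_apply, Fin.sum_univ_two] at h'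
    linear_combination h'
  by_cases h0 : ψ 0 = 0
  · have h1 : ψ 1 ≠ 0 := by
      rcases exists_index_ne_zero hψ with ⟨i, hi⟩
      fin_cases i
      · exact absurd h0 hi
      · exact hi
    have hχ1 : χ 1 = 0 := by
      have hc : (starRingEnd ℂ) (ψ 1) ≠ 0 := by simpa using h1
      have : (starRingEnd ℂ) (ψ 1) * χ 1 = 0 := by
        simpa [h0] using hinner
      exact (mul_eq_zero.mp this).resolve_left hc
    refine ⟨χ 0 / (-(starRingEnd ℂ) (ψ 1)), qubit_ext ?_ ?_⟩
    · have hc : (-(starRingEnd ℂ) (ψ 1)) ≠ 0 := by simpa using h1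
      rw [PiLp.smul_apply, perpQ_zero, smul_eq_mul, div_mul_eq_mul_div, eq_div_iff hc]
    · simp [PiLp.smul_apply, smul_eq_mul, h0, hχ1]
  · refine ⟨χ 1 / (starRingEnd ℂ) (ψ 0), qubit_ext ?_ ?_⟩
    · have hc : (starRingEnd ℂ) (ψ 0) ≠ 0 := by simpa using h0
      rw [PiLp.smul_apply, perpQ_zero, smul_eq_mul, div_mul_eq_mul_div, eq_div_iff hc]
      linear_combination hinner
    · have hc : (starRingEnd ℂ) (ψ 0) ≠ 0 := by simpa using h0
      rw [PiLp.smul_apply, perpQ_one, smul_eq_mul, div_mul_cancel₀ _ hc]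

/-- Two qubit vectors are related if one is a nonzero multiple of the other or of the
orthogonal complement of the other. -/
def relQ (ψ χ : Qubit) : Prop := ∃ c : ℂ, c ≠ 0 ∧ (χ = c • ψ ∨ χ = c • perpQ ψ)

lemma relQ_refl (ψ : Qubit) : relQ ψ ψ := ⟨1, one_ne_zero, Or.inl (one_smul ℂ ψ).symm⟩

lemma relQ_symm {ψ χ : Qubit} (h : relQ ψ χ) : relQ χ ψ := by
  obtain ⟨c, hc, h | h⟩ := h
  · exact ⟨c⁻¹, inv_ne_zero hc, Or.inl (by rw [h, smul_smul, inv_mul_cancel₀ hc, one_smul])⟩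
  · refine ⟨-((starRingEnd ℂ) c)⁻¹, by simpa using hc, Or.inr ?_⟩
    rw [h, perpQ_smul, perpQ_perpQ]
    rw [smul_smul, smul_neg, ← neg_smul, neg_mul, neg_neg,
      inv_mul_cancel₀ (by simpa using hc), one_smul]

lemma relQ_trans {ψ χ ξ : Qubit} (h1 : relQ ψ χ) (h2 : relQ χ ξ) : relQ ψ ξ := by
  obtain ⟨c, hc, hc'⟩ := h1
  obtain ⟨d, hd, hd'⟩ := h2
  rcases hc' with h | h <;> rcases hd' with h' | h' <;> subst h
  · exact ⟨d * c, mul_ne_zero hd hc, Or.inl (by rw [h', smul_smul])⟩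
  · refine ⟨d * (starRingEnd ℂ) c, by simp [hd, hc], Or.inr ?_⟩
    rw [h', perpQ_smul, smul_smul]
  · exact ⟨d * c, mul_ne_zero hd hc, Or.inr (by rw [h', smul_smul])⟩
  · refine ⟨-(d * (starRingEnd ℂ) c), by simp [hd, hc], Or.inl ?_⟩
    rw [h', perpQ_smul, perpQ_perpQ, smul_smul, smul_neg, ← neg_smul]

def setoidQ : Setoid Qubit := ⟨relQ, ⟨relQ_refl, relQ_symm, relQ_trans⟩⟩

/-- A representative of the `relQ`-class of `ψ`. -/
noncomputable def repQ (ψ : Qubit) : Qubit := (Quotient.mk setoidQ ψ).out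

lemma repQ_rel (ψ : Qubit) : relQ (repQ ψ) ψ :=
  Quotient.exact (Quotient.out_eq (Quotient.mk setoidQ ψ))

lemma repQ_eq_of_rel {ψ χ : Qubit} (h : relQ ψ χ) : repQ ψ = repQ χ := by
  unfold repQ
  rw [Quotient.sound (a := ψ) (b := χ) h]

/-- membership in the chosen half of each class -/
def gSet (ψ : Qubit) : Prop := ∃ c : ℂ, c ≠ 0 ∧ ψ = c • repQ ψ

open Classical in
/-- The one-sided ray colouring of the qubit space. -/
noncomputable def gQ (ψ : Qubit) : ℝ := if gSet ψ then 1 else 0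

lemma gQ_pos {ψ : Qubit} (h : gSet ψ) : gQ ψ = 1 := by unfold gQ; rw [if_pos h]

lemma gQ_neg {ψ : Qubit} (h : ¬ gSet ψ) : gQ ψ = 0 := by unfold gQ; rw [if_neg h]

lemma gQ_01 (ψ : Qubit) : gQ ψ = 0 ∨ gQ ψ = 1 := by
  by_cases h : gSet ψ
  · exact Or.inr (gQ_pos h)
  · exact Or.inl (gQ_neg h)

lemma gSet_smul {ψ : Qubit} {c : ℂ} (hc : c ≠ 0) : gSet (c • ψ) ↔ gSet ψ := by
  have hrel : relQ ψ (c • ψ) := ⟨c, hc, Or.inl rfl⟩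
  have hrep : repQ (c • ψ) = repQ ψ := (repQ_eq_of_rel hrel).symm
  unfold gSet
  rw [hrep]
  constructor
  · rintro ⟨d, hd, hda⟩
    refine ⟨c⁻¹ * d, by simp [hc, hd], ?_⟩
    rw [← smul_smul, ← hda, smul_smul, inv_mul_cancel₀ hc, one_smul]
  · rintro ⟨d, hd, hda⟩
    exact ⟨c * d, by simp [hc, hd], by rw [← smul_smul, ← hda]⟩

lemma gQ_smul {ψ : Qubit} {c : ℂ} (hc : c ≠ 0) : gQ (c • ψ) = gQ ψ := by
  by_cases h : gSet ψ
  · rw [gQ_pos ((gSet_smul hc).mpr h), gQ_pos h]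
  · rw [gQ_neg (fun hh => h ((gSet_smul hc).mp hh)), gQ_neg h]

lemma inner_smul_self_ne {ψ : Qubit} (hψ : ψ ≠ 0) {d : ℂ} (hd : d ≠ 0) :
    ⟪ψ, d • ψ⟫_ℂ ≠ 0 := by
  rw [inner_smul_right]
  refine mul_ne_zero hd fun hh => hψ ?_
  exact inner_self_eq_zero.mp hh

lemma gQ_add_orth {ψ χ : Qubit} (hψ : ‖ψ‖ = 1) (hχ : ‖χ‖ = 1) (h : ⟪ψ, χ⟫_ℂ = 0) :
    gQ ψ + gQ χ = 1 := by
  have hψ0 : ψ ≠ 0 := by intro h0; rw [h0] at hψ; simp at hψ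
  have hχ0 : χ ≠ 0 := by intro h0; rw [h0] at hχ; simp at hχ
  obtain ⟨t, ht⟩ := orth_eq_smul_perpQ hψ0 h
  have htne : t ≠ 0 := by
    intro h0; rw [h0, zero_smul] at ht; exact hχ0 ht
  have hrel : relQ ψ χ := ⟨t, htne, Or.inr ht⟩
  have hrep : repQ ψ = repQ χ := repQ_eq_of_rel hrel
  obtain ⟨o, ho⟩ : ∃ o, repQ ψ = o := ⟨_, rfl⟩
  have horel : relQ o ψ := ho ▸ repQ_rel ψ
  have hGψ : gSet ψ ↔ ∃ c : ℂ, c ≠ 0 ∧ ψ = c • o := by unfold gSet; rw [ho]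
  have hGχ : gSet χ ↔ ∃ c : ℂ, c ≠ 0 ∧ χ = c • o := by unfold gSet; rw [← hrep, ho]
  have ho0 : o ≠ 0 := by
    intro h0
    rw [h0] at horel
    obtain ⟨c, hc, hcc | hcc⟩ := horel
    · rw [smul_zero] at hcc; exact hψ0 hcc
    · rw [perpQ_zero_vec, smul_zero] at hcc; exact hψ0 hcc
  obtain ⟨c, hc, hcc | hcc⟩ := horel
  · -- ψ is a multiple of the representative : gQ ψ = 1, gQ χ = 0
    have hg1 : gQ ψ = 1 := gQ_pos (hGψ.mpr ⟨c, hc, hcc⟩)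
    have hg0 : gQ χ = 0 := by
      refine gQ_neg fun hG => ?_
      obtain ⟨d, hd, hdd⟩ := hGχ.mp hG
      have hχψ : χ = (d * c⁻¹) • ψ := by
        rw [hdd, hcc, smul_smul, mul_assoc, inv_mul_cancel₀ hc, mul_one]
      rw [hχψ] at h
      exact inner_smul_self_ne hψ0 (by simp [hd, hc]) h
    rw [hg1, hg0]; ring
  · -- ψ is a multiple of perpQ of the representative : gQ ψ = 0, gQ χ = 1
    have hg0 : gQ ψ = 0 := by
      refine gQ_neg fun hG => ?_
      obtain ⟨d, hd, hdd⟩ := hGψ.mp hG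
      have horth : ⟪o, ψ⟫_ℂ = 0 := by
        rw [hcc, inner_smul_right, inner_perpQ_self, mul_zero]
      rw [hdd] at horth
      exact inner_smul_self_ne ho0 hd horth
    have hg1 : gQ χ = 1 := by
      refine gQ_pos (hGχ.mpr ⟨-(t * (starRingEnd ℂ) c), by simp [htne, hc], ?_⟩)
      rw [ht, hcc, perpQ_smul, perpQ_perpQ, smul_smul, smul_neg, ← neg_smul]
    rw [hg1, hg0]; ring

lemma exists_unit_gQ_one : ∃ u : Qubit, ‖u‖ = 1 ∧ gQ u = 1 := by
  have he : ‖(EuclideanSpace.single (0 : Fin 2) (1 : ℂ) : Qubit)‖ = 1 := by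
    simp [EuclideanSpace.norm_single]
  set e : Qubit := EuclideanSpace.single (0 : Fin 2) (1 : ℂ)
  have hp : ‖perpQ e‖ = 1 := norm_perpQ e he
  have hsum := gQ_add_orth he hp (inner_perpQ_self e)
  rcases gQ_01 e with h0 | h1
  · exact ⟨perpQ e, hp, by linarith⟩
  · exact ⟨e, he, h1⟩


section tens

variable {n : ℕ}

lemma tens_apply (ψ : Fin n → Qubit) (x : Fin n → Fin 2) : tens ψ x = ∏ j, ψ j (x j) := rfl

lemma inner_tens (ψ χ : Fin n → Qubit) :
    ⟪tens ψ, tens χ⟫_ℂ = ∏ j, ⟪ψ j, χ j⟫_ℂ := by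
  classical
  simp only [PiLp.inner_apply, RCLike.inner_apply, tens_apply]
  rw [Finset.prod_univ_sum (fun _ => (Finset.univ : Finset (Fin 2)))
    (fun j i => χ j i * (starRingEnd ℂ) (ψ j i))]
  rw [Fintype.piFinset_univ]
  congr 1
  funext x
  rw [map_prod, Finset.prod_mul_distrib]

lemma tens_smul (c : Fin n → ℂ) (ψ : Fin n → Qubit) :
    tens (fun j => c j • ψ j) = (∏ j, c j) • tens ψ := by
  refine PiLp.ext fun x => ?_
  rw [PiLp.smul_apply, tens_apply, tens_apply, smul_eq_mul, ← Finset.prod_mul_distrib]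
  congr 1

lemma tens_eq_zero {ψ : Fin n → Qubit} {i : Fin n} (h : ψ i = 0) : tens ψ = 0 := by
  refine PiLp.ext fun x => ?_
  rw [tens_apply, PiLp.zero_apply]
  refine Finset.prod_eq_zero (Finset.mem_univ i) ?_
  rw [h]
  rfl

lemma norm_tens {ψ : Fin n → Qubit} (h : ∀ j, ‖ψ j‖ = 1) : ‖tens ψ‖ = 1 := by
  refine norm_one_of_inner_self ?_
  rw [inner_tens]
  refine Finset.prod_eq_one fun j _ => ?_
  rw [inner_self_eq_norm_sq_to_K, h j]
  norm_num

/-- Unit product vectors have a representation with unit factors. -/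
lemma exists_unit_factors {v : NQubit n} (hp : IsProduct v) (hv : ‖v‖ = 1) :
    ∃ ψ : Fin n → Qubit, (∀ j, ‖ψ j‖ = 1) ∧ v = tens ψ := by
  obtain ⟨ψ, rfl⟩ := hp
  have hne : ∀ j, ψ j ≠ 0 := by
    intro j hj
    rw [tens_eq_zero hj] at hv
    simp at hv
  have hup : ∀ j, ‖((‖ψ j‖ : ℂ))⁻¹ • ψ j‖ = 1 := by
    intro j
    have hnz : ‖ψ j‖ ≠ 0 := norm_ne_zero_iff.mpr (hne j)
    rw [norm_smul, norm_inv]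
    simp only [Complex.norm_real, Real.norm_eq_abs, abs_norm]
    field_simp
  refine ⟨fun j => ((‖ψ j‖ : ℂ))⁻¹ • ψ j, hup, ?_⟩
  have hts := tens_smul (fun j => ((‖ψ j‖ : ℂ))⁻¹) ψ
  have hc : (∏ j, ((‖ψ j‖ : ℂ))⁻¹) = ((∏ j, ‖ψ j‖⁻¹ : ℝ) : ℂ) := by
    push_cast
    rfl
  have hwn : ‖tens (fun j => ((‖ψ j‖ : ℂ))⁻¹ • ψ j)‖ = 1 := norm_tens hup
  have hwn' : (∏ j, ‖ψ j‖⁻¹ : ℝ) = 1 := by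
    have hnn := congrArg norm hts
    rw [hwn, hc, norm_smul, Complex.norm_real, Real.norm_eq_abs,
      abs_of_nonneg (by positivity), hv, mul_one] at hnn
    exact hnn.symm
  rw [hts, hc, hwn', Complex.ofReal_one, one_smul]

/-- Factors of equal unit product vectors agree up to a phase, factor by factor. -/
lemma tens_factor_unique {ψ χ : Fin n → Qubit} (h : tens ψ = tens χ)
    (hψ : ∀ j, ‖ψ j‖ = 1) (hχ : ∀ j, ‖χ j‖ = 1) :
    ∀ j, ∃ c : ℂ, c ≠ 0 ∧ ψ j = c • χ j := by
  classical
  intro j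
  have hχne : ∀ i, χ i ≠ 0 := fun i hi => by
    have := hχ i; rw [hi] at this; simp at this
  have hψne : ∀ i, ψ i ≠ 0 := fun i hi => by
    have := hψ i; rw [hi] at this; simp at this
  choose b hb using fun i => exists_index_ne_zero (hχne i)
  set A : ℂ := ∏ i ∈ Finset.univ.erase j, ψ i (b i) with hA
  set Bc : ℂ := ∏ i ∈ Finset.univ.erase j, χ i (b i) with hB
  have hBne : Bc ≠ 0 := Finset.prod_ne_zero_iff.mpr fun i _ => hb i
  have key : ∀ t : Fin 2, ψ j t * A = χ j t * Bc := by
    intro t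
    have hx : tens ψ (Function.update b j t) = tens χ (Function.update b j t) := by rw [h]
    rw [tens_apply, tens_apply] at hx
    have e1 : ∏ i, ψ i (Function.update b j t i)
        = ψ j t * ∏ i ∈ Finset.univ.erase j, ψ i (b i) := by
      rw [← Finset.mul_prod_erase Finset.univ _ (Finset.mem_univ j)]
      rw [Function.update_self]
      congr 1
      refine Finset.prod_congr rfl fun i hi => ?_
      rw [Function.update_of_ne (Finset.ne_of_mem_erase hi)]
    have e2 : ∏ i, χ i (Function.update b j t i)
        = χ j t * ∏ i ∈ Finset.univ.erase j, χ i (b i) := by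
      rw [← Finset.mul_prod_erase Finset.univ _ (Finset.mem_univ j)]
      rw [Function.update_self]
      congr 1
      refine Finset.prod_congr rfl fun i hi => ?_
      rw [Function.update_of_ne (Finset.ne_of_mem_erase hi)]
    rw [e1, e2] at hx
    exact hx
  have hAne : A ≠ 0 := by
    intro h0
    have hz : ∀ t : Fin 2, χ j t = 0 := by
      intro t
      have := key t
      rw [h0, mul_zero] at this
      exact (mul_eq_zero.mp this.symm).resolve_right hBne
    exact hχne j (qubit_ext (hz 0) (hz 1))
  refine ⟨Bc / A, div_ne_zero hBne hAne, qubit_ext ?_ ?_⟩ <;>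
  · rw [PiLp.smul_apply, smul_eq_mul]
    field_simp
    linear_combination key _

end tens

section fdef

/-- A unit-factor product representation exists. -/
def UP {n : ℕ} (v : NQubit n) : Prop :=
  ∃ ψ : Fin n → Qubit, (∀ j, ‖ψ j‖ = 1) ∧ v = tens ψ

open Classical in
noncomputable def uRep {n : ℕ} (v : NQubit n) : Fin n → Qubit :=
  if h : UP v then h.choose else fun _ => 0

lemma uRep_spec {n : ℕ} {v : NQubit n} (h : UP v) :
    (∀ j, ‖uRep v j‖ = 1) ∧ v = tens (uRep v) := by
  unfold uRep
  rw [dif_pos h]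
  exact ⟨h.choose_spec.1, h.choose_spec.2⟩

open Classical in
/-- The colouring of product vectors. -/
noncomputable def fN (n : ℕ) (v : NQubit n) : ℝ :=
  if UP v then ∏ j, gQ (uRep v j) else 0

lemma fN_eq {n : ℕ} {v : NQubit n} {ψ : Fin n → Qubit} (hψu : ∀ j, ‖ψ j‖ = 1)
    (hv : v = tens ψ) : fN n v = ∏ j, gQ (ψ j) := by
  have h : UP v := ⟨ψ, hψu, hv⟩
  obtain ⟨hu, he⟩ := uRep_spec h
  unfold fN
  rw [if_pos h]
  refine Finset.prod_congr rfl fun j _ => ?_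
  obtain ⟨c, hc, hcc⟩ := tens_factor_unique (he.symm.trans hv) hu hψu j
  rw [hcc, gQ_smul hc]

lemma prod01 {ι : Type*} [Fintype ι] (p : ι → ℝ) (h : ∀ j, p j = 0 ∨ p j = 1) :
    (∏ j, p j) = 0 ∨ (∏ j, p j) = 1 := by
  classical
  refine Finset.prod_induction p (fun x => x = 0 ∨ x = 1) ?_ (Or.inr rfl) (fun j _ => h j)
  rintro a b (ha | ha) (hb | hb) <;> simp [ha, hb]

lemma fN_01 (n : ℕ) (v : NQubit n) : fN n v = 0 ∨ fN n v = 1 := by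
  by_cases h : UP v
  · unfold fN
    rw [if_pos h]
    exact prod01 _ fun j => gQ_01 _
  · unfold fN
    rw [if_neg h]
    exact Or.inl rfl

end fdef

section basis

open Module

variable {H : Type*} [NormedAddCommGroup H] [InnerProductSpace ℂ H] [FiniteDimensional ℂ H]

lemma onb_norm {B : Finset H} (hB : Orthonormal ℂ (fun v : B => (v : H))) {v : H}
    (hv : v ∈ B) : ‖v‖ = 1 := hB.1 ⟨v, hv⟩

lemma onb_inner {B : Finset H} (hB : Orthonormal ℂ (fun v : B => (v : H))) {v w : H}
    (hv : v ∈ B) (hw : w ∈ B) (hne : v ≠ w) : ⟪v, w⟫_ℂ = 0 :=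
  hB.2 (by simp [Subtype.ext_iff, hne] : (⟨v, hv⟩ : B) ≠ (⟨w, hw⟩ : B))

lemma orthonormal_of_finset {B : Finset H} (h1 : ∀ v ∈ B, ‖v‖ = 1)
    (h2 : ∀ v ∈ B, ∀ w ∈ B, v ≠ w → ⟪v, w⟫_ℂ = 0) :
    Orthonormal ℂ (fun v : B => (v : H)) := by
  refine ⟨fun i => h1 i i.2, fun i j hij => h2 i i.2 j j.2 ?_⟩
  exact fun hc => hij (Subtype.ext hc)

lemma orthonormal_card_le {B : Finset H} (hB : Orthonormal ℂ (fun v : B => (v : H))) :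
    B.card ≤ finrank ℂ H :=
  hB.linearIndependent.finset_card_le_finrank

lemma onbasis_card {B : Finset H} (hB : IsONBasis B) : B.card = finrank ℂ H := by
  refine le_antisymm (orthonormal_card_le hB.1) ?_
  have h3 := finrank_span_finset_le_card (R := ℂ) B
  rw [Set.finrank, hB.2, finrank_top] at h3
  exact h3

lemma isONBasis_of_card {B : Finset H} (hON : Orthonormal ℂ (fun v : B => (v : H)))
    (hcard : B.card = finrank ℂ H) : IsONBasis B := by
  refine ⟨hON, ?_⟩
  have hsp := hON.linearIndependent.span_eq_top_of_card_eq_finrank'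
    (by rw [Fintype.card_coe, hcard])
  rwa [Subtype.range_coe_subtype, Finset.setOf_mem] at hsp

lemma finrank_NQubit (n : ℕ) : finrank ℂ (NQubit n) = 2 ^ n := by
  rw [finrank_euclideanSpace]
  simp [Fintype.card_fun]

end basis

theorem sum_fN {n : ℕ} (B : Finset (NQubit n)) (hB : IsONBasis B)
    (hprod : ∀ v ∈ B, IsProduct v) : ∑ v ∈ B, fN n v = 1 := by
  classical
  induction n with
  | zero =>
      have hcard : B.card = 1 := by
        rw [onbasis_card hB, finrank_NQubit, pow_zero]
      obtain ⟨v, rfl⟩ := Finset.card_eq_one.mp hcard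
      rw [Finset.sum_singleton]
      obtain ⟨ψ, rfl⟩ := hprod v (by simp)
      have hUP : UP (tens ψ) := ⟨ψ, fun j => j.elim0, rfl⟩
      unfold fN
      rw [if_pos hUP]
      simp
  | succ n ih =>
      have hUP : ∀ v ∈ B, UP v := fun v hv =>
        exists_unit_factors (hprod v hv) (onb_norm hB.1 hv)
      set L : NQubit (n+1) → Qubit := fun v => uRep v (Fin.last n) with hL
      set R : NQubit (n+1) → NQubit n := fun v => tens (Fin.init (uRep v)) with hR
      have hRnorm : ∀ v ∈ B, ‖R v‖ = 1 := fun v hv =>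
        norm_tens fun j => (uRep_spec (hUP v hv)).1 _
      have hLnorm : ∀ v ∈ B, ‖L v‖ = 1 := fun v hv => (uRep_spec (hUP v hv)).1 _
      have hsplit : ∀ v ∈ B, ∀ w ∈ B,
          ⟪v, w⟫_ℂ = ⟪R v, R w⟫_ℂ * ⟪L v, L w⟫_ℂ := by
        intro v hv w hw
        conv_lhs => rw [(uRep_spec (hUP v hv)).2, (uRep_spec (hUP w hw)).2]
        rw [inner_tens, Fin.prod_univ_castSucc, hR, inner_tens]
        rfl
      set Bp := B.filter (fun v => gQ (L v) = 1) with hBp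
      set Bm := B.filter (fun v => ¬ gQ (L v) = 1) with hBm
      have hsub : ∀ v ∈ Bp, v ∈ B := fun v hv => (Finset.mem_filter.mp hv).1
      have hsubm : ∀ v ∈ Bm, v ∈ B := fun v hv => (Finset.mem_filter.mp hv).1
      -- orthogonality of the reduced vectors within each class
      have horthp : ∀ v ∈ Bp, ∀ w ∈ Bp, v ≠ w → ⟪R v, R w⟫_ℂ = 0 := by
        intro v hv w hw hne
        have h0 := onb_inner hB.1 (hsub v hv) (hsub w hw) hne
        rw [hsplit v (hsub v hv) w (hsub w hw)] at h0
        rcases mul_eq_zero.mp h0 with h | h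
        · exact h
        · exfalso
          have hsum := gQ_add_orth (hLnorm v (hsub v hv)) (hLnorm w (hsub w hw)) h
          have h1 := (Finset.mem_filter.mp hv).2
          have h2 := (Finset.mem_filter.mp hw).2
          rw [h1, h2] at hsum
          norm_num at hsum
      have horthm : ∀ v ∈ Bm, ∀ w ∈ Bm, v ≠ w → ⟪R v, R w⟫_ℂ = 0 := by
        intro v hv w hw hne
        have h0 := onb_inner hB.1 (hsubm v hv) (hsubm w hw) hne
        rw [hsplit v (hsubm v hv) w (hsubm w hw)] at h0
        rcases mul_eq_zero.mp h0 with h | h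
        · exact h
        · exfalso
          have hsum := gQ_add_orth (hLnorm v (hsubm v hv)) (hLnorm w (hsubm w hw)) h
          have h1 := (gQ_01 (L v)).resolve_right (Finset.mem_filter.mp hv).2
          have h2 := (gQ_01 (L w)).resolve_right (Finset.mem_filter.mp hw).2
          rw [h1, h2] at hsum
          norm_num at hsum
      -- injectivity of R on each class
      have hinjp : ∀ v ∈ Bp, ∀ w ∈ Bp, R v = R w → v = w := by
        intro v hv w hw heq
        by_contra hne
        have h0 := horthp v hv w hw hne
        rw [heq, inner_self_eq_norm_sq_to_K, hRnorm w (hsub w hw)] at h0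
        norm_num at h0
      have hinjm : ∀ v ∈ Bm, ∀ w ∈ Bm, R v = R w → v = w := by
        intro v hv w hw heq
        by_contra hne
        have h0 := horthm v hv w hw hne
        rw [heq, inner_self_eq_norm_sq_to_K, hRnorm w (hsubm w hw)] at h0
        norm_num at h0
      set B1 := Bp.image R with hB1
      set B2 := Bm.image R with hB2
      have hc1 : B1.card = Bp.card := Finset.card_image_of_injOn hinjp
      have hc2 : B2.card = Bm.card := Finset.card_image_of_injOn hinjm
      have hON1 : Orthonormal ℂ (fun v : B1 => (v : NQubit n)) := by
        refine orthonormal_of_finset ?_ ?_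
        · intro u hu
          obtain ⟨v, hv, rfl⟩ := Finset.mem_image.mp hu
          exact hRnorm v (hsub v hv)
        · intro u1 hu1 u2 hu2 hne
          obtain ⟨v, hv, rfl⟩ := Finset.mem_image.mp hu1
          obtain ⟨w, hw, rfl⟩ := Finset.mem_image.mp hu2
          exact horthp v hv w hw (fun hc => hne (by rw [hc]))
      have hON2 : Orthonormal ℂ (fun v : B2 => (v : NQubit n)) := by
        refine orthonormal_of_finset ?_ ?_
        · intro u hu
          obtain ⟨v, hv, rfl⟩ := Finset.mem_image.mp hu
          exact hRnorm v (hsubm v hv)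
        · intro u1 hu1 u2 hu2 hne
          obtain ⟨v, hv, rfl⟩ := Finset.mem_image.mp hu1
          obtain ⟨w, hw, rfl⟩ := Finset.mem_image.mp hu2
          exact horthm v hv w hw (fun hc => hne (by rw [hc]))
      have hble1 : B1.card ≤ 2 ^ n := by
        have := orthonormal_card_le hON1
        rwa [finrank_NQubit] at this
      have hble2 : B2.card ≤ 2 ^ n := by
        have := orthonormal_card_le hON2
        rwa [finrank_NQubit] at this
      have hBcard : B.card = 2 ^ (n + 1) := by
        rw [onbasis_card hB, finrank_NQubit]
      have hsplitcard : Bp.card + Bm.card = B.card :=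
        Finset.card_filter_add_card_filter_not _
      have hc1' : B1.card = 2 ^ n := by
        rw [hc1]
        rw [hc1] at hble1
        rw [hc2] at hble2
        omega
      have hbasis1 : IsONBasis B1 := isONBasis_of_card hON1 (by rw [hc1', finrank_NQubit])
      have hprod1 : ∀ u ∈ B1, IsProduct u := by
        intro u hu
        obtain ⟨v, hv, rfl⟩ := Finset.mem_image.mp hu
        exact ⟨_, rfl⟩
      have hIH := ih B1 hbasis1 hprod1
      -- compute the sum
      have hfv : ∀ v ∈ B, fN (n+1) v = fN n (R v) * gQ (L v) := by
        intro v hv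
        rw [fN_eq (uRep_spec (hUP v hv)).1 (uRep_spec (hUP v hv)).2,
          Fin.prod_univ_castSucc]
        congr 1
        exact (fN_eq (fun j => (uRep_spec (hUP v hv)).1 _) rfl).symm
      rw [← Finset.sum_filter_add_sum_filter_not B (fun v => gQ (L v) = 1)]
      have hm0 : ∑ v ∈ Bm, fN (n+1) v = 0 := by
        refine Finset.sum_eq_zero fun v hv => ?_
        rw [hfv v (hsubm v hv),
          (gQ_01 (L v)).resolve_right (Finset.mem_filter.mp hv).2, mul_zero]
      have hp1 : ∑ v ∈ Bp, fN (n+1) v = ∑ u ∈ B1, fN n u := by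
        rw [Finset.sum_image hinjp]
        refine Finset.sum_congr rfl fun v hv => ?_
        rw [hfv v (hsub v hv), (Finset.mem_filter.mp hv).2, mul_one]
      rw [← hBp, ← hBm, hm0, hp1, hIH, add_zero]

section final

lemma unit_combo {a b : Qubit} (ha : ‖a‖ = 1) (hb : ‖b‖ = 1) (hab : ⟪a, b⟫_ℂ = 0)
    (c s : ℝ) (h : c ^ 2 + s ^ 2 = 1) : ‖(c : ℂ) • a + (s : ℂ) • b‖ = 1 := by
  have hba : ⟪b, a⟫_ℂ = 0 := by
    rw [← inner_conj_symm, hab, map_zero]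
  have haa : ⟪a, a⟫_ℂ = 1 := by
    rw [inner_self_eq_norm_sq_to_K, ha]; norm_num
  have hbb : ⟪b, b⟫_ℂ = 1 := by
    rw [inner_self_eq_norm_sq_to_K, hb]; norm_num
  refine norm_one_of_inner_self ?_
  simp only [inner_add_left, inner_add_right, inner_smul_left, inner_smul_right,
    haa, hbb, hab, hba, Complex.conj_ofReal, mul_zero, zero_mul,
    add_zero, zero_add, mul_one]
  have hcs : ((c : ℝ) : ℂ) ^ 2 + ((s : ℝ) : ℂ) ^ 2 = 1 := by
    rw [← Complex.ofReal_pow, ← Complex.ofReal_pow, ← Complex.ofReal_add, h,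
      Complex.ofReal_one]
  push_cast
  push_cast at hcs
  linear_combination hcs

lemma tens_cons_linear {m : ℕ} (w : Fin m → Qubit) (a b : Qubit) (c s : ℝ) :
    tens (Fin.cons ((c : ℂ) • a + (s : ℂ) • b) w)
      = (c : ℂ) • tens (Fin.cons a w) + (s : ℂ) • tens (Fin.cons b w) := by
  refine PiLp.ext fun x => ?_
  rw [PiLp.add_apply, PiLp.smul_apply, PiLp.smul_apply, tens_apply, tens_apply, tens_apply,
    Fin.prod_univ_succ, Fin.prod_univ_succ, Fin.prod_univ_succ]
  simp only [Fin.cons_zero, Fin.cons_succ, PiLp.add_apply, PiLp.smul_apply, smul_eq_mul]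
  ring

end final

end UGT
/-- failure of Gleason's theorem for unentangled multiqubit projections:
for every `n ≥ 1` there is a `{0,1}`-valued function `f` on the product unit vectors of
`(ℂ²)^{⊗n}`, depending only on rays, summing to `1` over every orthonormal basis of
product vectors, which is not of the form `f ψ = ⟨ψ, ρ ψ⟩` for any density operator `ρ`
(a positive semidefinite self-adjoint operator of trace `1`). -/
theorem gleason_fails_for_unentangled_multiqubit (n : ℕ) (hn : 1 ≤ n) :
    ∃ f : NQubit n → ℝ,
      (∀ v : NQubit n, IsProduct v → ‖v‖ = 1 → (f v = 0 ∨ f v = 1)) ∧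
      (∀ v w : NQubit n, IsProduct v → ‖v‖ = 1 → ‖w‖ = 1 →
        (∃ a : ℂ, a ≠ 0 ∧ w = a • v) → f w = f v) ∧
      (∀ B : Finset (NQubit n), IsONBasis B → (∀ v ∈ B, IsProduct v) →
        ∑ v ∈ B, f v = 1) ∧
      ¬ ∃ ρ : NQubit n →ₗ[ℂ] NQubit n,
        (∀ x y : NQubit n, ⟪ρ x, y⟫_ℂ = ⟪x, ρ y⟫_ℂ) ∧
        (∀ x : NQubit n, 0 ≤ (⟪x, ρ x⟫_ℂ).re) ∧
        LinearMap.trace ℂ (NQubit n) ρ = 1 ∧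
        (∀ v : NQubit n, IsProduct v → ‖v‖ = 1 → ⟪v, ρ v⟫_ℂ = (f v : ℂ)) := by
  classical
  refine ⟨UGT.fN n, fun v _ _ => UGT.fN_01 n v, ?_, fun B hB hp => UGT.sum_fN B hB hp, ?_⟩
  · -- ray invariance
    rintro v w hv hnv hnw ⟨a, ha, rfl⟩
    obtain ⟨ψ, hψu, rfl⟩ := UGT.exists_unit_factors hv hnv
    have hna : ‖a‖ = 1 := by
      rw [norm_smul, hnv, mul_one] at hnw
      exact hnw
    set i0 : Fin n := ⟨0, hn⟩ with hi0
    have hrepr : a • tens ψ = tens (fun j => (if j = i0 then a else 1) • ψ j) := by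
      rw [UGT.tens_smul]
      congr 1
      simp
    have hufac : ∀ j, ‖(if j = i0 then a else 1) • ψ j‖ = 1 := by
      intro j
      by_cases h : j = i0
      · subst h
        simp [norm_smul, hna, hψu i0]
      · simp [h, hψu j]
    rw [UGT.fN_eq hufac hrepr, UGT.fN_eq hψu rfl]
    refine Finset.prod_congr rfl fun j _ => ?_
    by_cases h : j = i0
    · simp only [h, if_pos rfl]
      exact UGT.gQ_smul ha
    · simp only [if_neg h, one_smul]
  · -- no density operator
    rintro ⟨ρ, hsa, hpos, htr, hval⟩
    obtain ⟨m, rfl⟩ : ∃ m, n = m + 1 := ⟨n - 1, by omega⟩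
    obtain ⟨u, hu, hgu⟩ := UGT.exists_unit_gQ_one
    have hb : ‖UGT.perpQ u‖ = 1 := UGT.norm_perpQ u hu
    have hub : ⟪u, UGT.perpQ u⟫_ℂ = 0 := UGT.inner_perpQ_self u
    have hgb : UGT.gQ (UGT.perpQ u) = 0 := by
      have := UGT.gQ_add_orth hu hb hub
      linarith
    set b : Qubit := UGT.perpQ u with hbdef
    set w : Fin m → Qubit := fun _ => u with hw
    set V : Qubit → NQubit (m + 1) := fun a => tens (n := m + 1) (Fin.cons a w) with hV
    have hVfac : ∀ a : Qubit, ‖a‖ = 1 → ∀ j, ‖(Fin.cons a w : Fin (m + 1) → Qubit) j‖ = 1 := by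
      intro a ha j
      refine Fin.cases ?_ ?_ j
      · simpa using ha
      · intro i
        simpa using hu
    have hVnorm : ∀ a : Qubit, ‖a‖ = 1 → ‖V a‖ = 1 := fun a ha =>
      UGT.norm_tens (hVfac a ha)
    have hfV : ∀ a : Qubit, ‖a‖ = 1 → UGT.fN (m + 1) (V a) = UGT.gQ a := by
      intro a ha
      rw [hV]
      rw [UGT.fN_eq (hVfac a ha) rfl, Fin.prod_univ_succ]
      simp [hgu, hw]
    have hVval : ∀ a : Qubit, ‖a‖ = 1 → ⟪V a, ρ (V a)⟫_ℂ = ((UGT.gQ a : ℝ) : ℂ) := by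
      intro a ha
      rw [hval (V a) ⟨_, rfl⟩ (hVnorm a ha), hfV a ha]
    -- the quadratic polynomial
    set x : NQubit (m + 1) := V u with hx
    set y : NQubit (m + 1) := V b with hy
    have hxval : ⟪x, ρ x⟫_ℂ = 1 := by
      rw [hVval u hu, hgu]; norm_num
    have hyval : ⟪y, ρ y⟫_ℂ = 0 := by
      rw [hVval b hb, hgb]; norm_num
    set r : ℝ := (⟪x, ρ y⟫_ℂ + ⟪y, ρ x⟫_ℂ).re with hr
    set φ : ℝ → ℝ := fun θ => Real.cos θ ^ 2 + Real.cos θ * Real.sin θ * r with hφdef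
    have hφval : ∀ θ : ℝ, φ θ = 0 ∨ φ θ = 1 := by
      intro θ
      set c : ℝ := Real.cos θ
      set sθ : ℝ := Real.sin θ
      have hcs : c ^ 2 + sθ ^ 2 = 1 := by
        rw [add_comm]
        exact Real.sin_sq_add_cos_sq θ
      have haθ : ‖(c : ℂ) • u + (sθ : ℂ) • b‖ = 1 := UGT.unit_combo hu hb hub c sθ hcs
      have hVlin : V ((c : ℂ) • u + (sθ : ℂ) • b) = (c : ℂ) • x + (sθ : ℂ) • y :=
        UGT.tens_cons_linear w u b c sθ
      have h2 := hVval _ haθ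
      rw [hVlin] at h2
      have hexp : ⟪(c : ℂ) • x + (sθ : ℂ) • y, ρ ((c : ℂ) • x + (sθ : ℂ) • y)⟫_ℂ
          = (c : ℂ) ^ 2 * ⟪x, ρ x⟫_ℂ + (c : ℂ) * (sθ : ℂ) * (⟪x, ρ y⟫_ℂ + ⟪y, ρ x⟫_ℂ)
            + (sθ : ℂ) ^ 2 * ⟪y, ρ y⟫_ℂ := by
        rw [map_add, _root_.map_smul, _root_.map_smul]
        simp only [inner_add_left, inner_add_right, inner_smul_left, inner_smul_right,
          Complex.conj_ofReal]
        ring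
      rw [hexp, hxval, hyval, mul_one, mul_zero, add_zero] at h2
      have hre := congrArg Complex.re h2.symm
      have hrecalc : ((c : ℂ) ^ 2 + (c : ℂ) * (sθ : ℂ) * (⟪x, ρ y⟫_ℂ + ⟪y, ρ x⟫_ℂ)).re
          = c ^ 2 + c * sθ * r := by
        rw [hr]
        simp [Complex.add_re, Complex.mul_re, ← Complex.ofReal_pow, ← Complex.ofReal_mul,
          Complex.ofReal_re, Complex.ofReal_im]
      rw [hrecalc, Complex.ofReal_re] at hre
      have : φ θ = UGT.gQ ((c : ℂ) • u + (sθ : ℂ) • b) := by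
        rw [hφdef]
        exact hre.symm
      rw [this]
      exact UGT.gQ_01 _
    have hcont : Continuous φ := by
      rw [hφdef]
      fun_prop
    have h0 : φ 0 = 1 := by
      rw [hφdef]
      simp
    have hpi : φ (Real.pi / 2) = 0 := by
      rw [hφdef]
      simp [Real.cos_pi_div_two]
    have hmem : (1 / 2 : ℝ) ∈ Set.Icc (φ (Real.pi / 2)) (φ 0) := by
      rw [h0, hpi]
      norm_num
    obtain ⟨θ, _, hθ⟩ := intermediate_value_Icc'
      (by positivity : (0 : ℝ) ≤ Real.pi / 2) hcont.continuousOn hmem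
    rcases hφval θ with h | h <;> rw [hθ] at h <;> norm_num at h


end
end

section
/- Unentangled Kochen–Specker sets in the presence of a higher-dimensional subsystem: let H₁, …, Hₙ be finite-dimensional complex Hilbert spaces with dim(Hⱼ) ≥ 2 for all j and dim(Hⱼ) ≥ 3 for at least one j. Then there exists a finite set S of product unit vectors in H₁ ⊗ ⋯ ⊗ Hₙ that admits no KS-colouring; moreover S can be chosen so that already the subfamily of direct product bases contained in S witnesses uncolourability (there is no map c : S → {0,1} assigning exactly one value 1 to each direct product basis contained in S and never assigning 1 to two mutually orthogonal elements of S). -/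
open scoped InnerProductSpace
open MeasureTheory

noncomputable section

/-- The product vector `ψ₁ ⊗ ⋯ ⊗ ψₙ` in `H₁ ⊗ ⋯ ⊗ Hₙ`, where the `j`-th factor
`Hⱼ = ℂ^{d j}` is modelled as `EuclideanSpace ℂ (Fin (d j))` and the full tensor product
as `EuclideanSpace ℂ (Π j, Fin (d j))`; inner products multiply across factors. -/
noncomputable def tensD {n : ℕ} {d : Fin n → ℕ}
    (ψ : (j : Fin n) → EuclideanSpace ℂ (Fin (d j))) :
    EuclideanSpace ℂ ((j : Fin n) → Fin (d j)) :=
  WithLp.toLp 2 (fun f => ∏ j, ψ j (f j))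

/-- A direct product basis of `H₁ ⊗ ⋯ ⊗ Hₙ`: the elementwise tensor product of an
orthonormal basis of each factor. -/
def IsDirectProductBasis {n : ℕ} {d : Fin n → ℕ}
    (B : Finset (EuclideanSpace ℂ ((j : Fin n) → Fin (d j)))) : Prop :=
  ∃ b : (j : Fin n) → Fin (d j) → EuclideanSpace ℂ (Fin (d j)),
    (∀ j, Orthonormal ℂ (b j)) ∧
    (B : Set (EuclideanSpace ℂ ((j : Fin n) → Fin (d j)))) =
      Set.range (fun f : (j : Fin n) → Fin (d j) => tensD (fun j => b j (f j)))



-- ======== auxiliary development ========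


namespace KSSolver

abbrev Asn := List (ℕ × Bool)

def setA (A : Asn) (v : ℕ) (b : Bool) : Option Asn :=
  match A.lookup v with
  | none => some ((v, b) :: A)
  | some b' => if b = b' then some A else none

def pairOk (A : Asn) (p : ℕ × ℕ) : Bool :=
  !(A.lookup p.1 == some true && A.lookup p.2 == some true)

def set3 (A : Asn) (t : ℕ × ℕ × ℕ) (k : ℕ) : Option Asn :=
  match setA A t.1 (k == 0) with
  | none => none
  | some A1 =>
    match setA A1 t.2.1 (k == 1) with
    | none => none
    | some A2 => setA A2 t.2.2 (k == 2)

abbrev Step := (ℕ × ℕ × ℕ) × List (ℕ × ℕ)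

def branch (rest : Asn → Bool) (A : Asn) (t : Step) (k : ℕ) : Bool :=
  match set3 A t.1 k with
  | none => false
  | some A' => (t.2.all (pairOk A')) && rest A'

def solve : List Step → Asn → Bool
  | [], _ => true
  | t :: ts, A =>
      branch (solve ts) A t 0 || branch (solve ts) A t 1 || branch (solve ts) A t 2

def Agrees (c : ℕ → Bool) (A : Asn) : Prop :=
  ∀ v b, A.lookup v = some b → c v = b

theorem agrees_nil (c : ℕ → Bool) : Agrees c [] := by
  intro v b h; simp [List.lookup] at h

theorem setA_sound {c : ℕ → Bool} {A : Asn} {v : ℕ} {b : Bool}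
    (hA : Agrees c A) (hc : c v = b) :
    ∃ A', setA A v b = some A' ∧ Agrees c A' := by
  unfold setA
  cases h : A.lookup v with
  | none =>
      refine ⟨(v, b) :: A, rfl, ?_⟩
      intro w b' hw
      by_cases hwv : w = v
      · subst hwv
        simp [List.lookup] at hw
        rw [hw] at hc; exact hc
      · have hb : (w == v) = false := beq_eq_false_iff_ne.mpr hwv
        simp [List.lookup, hb] at hw
        exact hA w b' hw
  | some b' =>
      have hcb : c v = b' := hA v b' h
      have hbb : b = b' := by rw [← hc, hcb]
      subst hbb
      exact ⟨A, by simp, hA⟩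

def ExactlyOne (c : ℕ → Bool) (t : ℕ × ℕ × ℕ) : Prop :=
  ∃ k : ℕ, k < 3 ∧ c t.1 = (k == 0) ∧ c t.2.1 = (k == 1) ∧ c t.2.2 = (k == 2)

theorem set3_sound {c : ℕ → Bool} {A : Asn} {t : ℕ × ℕ × ℕ} {k : ℕ}
    (hA : Agrees c A) (h0 : c t.1 = (k == 0)) (h1 : c t.2.1 = (k == 1))
    (h2 : c t.2.2 = (k == 2)) :
    ∃ A', set3 A t k = some A' ∧ Agrees c A' := by
  obtain ⟨A1, e1, g1⟩ := setA_sound hA h0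
  obtain ⟨A2, e2, g2⟩ := setA_sound g1 h1
  obtain ⟨A3, e3, g3⟩ := setA_sound g2 h2
  exact ⟨A3, by simp [set3, e1, e2, e3], g3⟩

theorem pairs_sound {c : ℕ → Bool} {A : Asn} (hA : Agrees c A)
    {ps : List (ℕ × ℕ)} (hp : ∀ p ∈ ps, ¬(c p.1 = true ∧ c p.2 = true)) :
    ps.all (pairOk A) = true := by
  rw [List.all_eq_true]
  intro p hpmem
  unfold pairOk
  cases h1 : A.lookup p.1 with
  | none => simp [h1]
  | some b1 =>
    cases h2 : A.lookup p.2 with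
    | none => simp [h2]
    | some b2 =>
      have c1 := hA _ _ h1
      have c2 := hA _ _ h2
      cases b1
      · simp
      · cases b2
        · simp
        · exact absurd ⟨c1, c2⟩ (hp p hpmem)

theorem solve_sound {c : ℕ → Bool} :
    ∀ (ts : List Step) (A : Asn), Agrees c A →
      (∀ t ∈ ts, ExactlyOne c t.1) →
      (∀ t ∈ ts, ∀ p ∈ t.2, ¬(c p.1 = true ∧ c p.2 = true)) →
      solve ts A = true := by
  intro ts
  induction ts with
  | nil => intro A _ _ _; rfl
  | cons t ts ih =>
    intro A hA ht hp
    obtain ⟨k, hk3, h0, h1, h2⟩ := ht t (by simp)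
    obtain ⟨A', e, g⟩ := set3_sound hA h0 h1 h2
    have hbr : branch (solve ts) A t k = true := by
      simp [branch, e, pairs_sound g (hp t (by simp)),
        ih A' g (fun t' h' => ht t' (by simp [h']))
          (fun t' h' => hp t' (by simp [h']))]
    unfold solve
    interval_cases k
    · rw [hbr]; rfl
    · rw [hbr]; simp
    · rw [hbr]; simp

theorem unsat {ts : List Step}
    (hsolve : solve ts [] = false) :
    ¬ ∃ c : ℕ → Bool, (∀ t ∈ ts, ExactlyOne c t.1) ∧
      (∀ t ∈ ts, ∀ p ∈ t.2, ¬(c p.1 = true ∧ c p.2 = true)) := by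
  rintro ⟨c, h1, h2⟩
  have := solve_sound ts [] (agrees_nil c) h1 h2
  rw [hsolve] at this
  exact Bool.false_ne_true this

end KSSolver

open scoped Classical


namespace KSZ

abbrev Z2 := ℤ × ℤ
def z2add (x y : Z2) : Z2 := (x.1 + y.1, x.2 + y.2)
def z2mul (x y : Z2) : Z2 := (x.1 * y.1 + 2 * x.2 * y.2, x.1 * y.2 + x.2 * y.1)
noncomputable def evZ (x : Z2) : ℝ := x.1 + x.2 * Real.sqrt 2

lemma evZ_add (x y : Z2) : evZ (z2add x y) = evZ x + evZ y := by
  simp [evZ, z2add]; push_cast; ring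

lemma evZ_mul (x y : Z2) : evZ (z2mul x y) = evZ x * evZ y := by
  have h2 : Real.sqrt 2 * Real.sqrt 2 = 2 := Real.mul_self_sqrt (by norm_num)
  simp only [evZ, z2mul]
  push_cast
  ring_nf
  rw [Real.sq_sqrt (by norm_num : (0:ℝ) ≤ 2)]

abbrev V3 := Z2 × Z2 × Z2
def dotZ (u v : V3) : Z2 := z2add (z2mul u.1 v.1) (z2add (z2mul u.2.1 v.2.1) (z2mul u.2.2 v.2.2))

noncomputable def vecZ (u : V3) : EuclideanSpace ℂ (Fin 3) :=
  WithLp.toLp 2 ![((evZ u.1 : ℝ) : ℂ), ((evZ u.2.1 : ℝ) : ℂ), ((evZ u.2.2 : ℝ) : ℂ)]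

lemma inner_vecZ (u v : V3) : ⟪vecZ u, vecZ v⟫_ℂ = ((evZ (dotZ u v) : ℝ) : ℂ) := by
  simp [vecZ, PiLp.inner_apply, Fin.sum_univ_three, RCLike.inner_apply, dotZ,
    evZ_add, evZ_mul, Complex.conj_ofReal]
  push_cast
  ring

def Pos (u : V3) : Prop := 0 < (dotZ u u).1 ∧ (dotZ u u).2 = 0

noncomputable def uvec (u : V3) : EuclideanSpace ℂ (Fin 3) :=
  ((‖vecZ u‖⁻¹ : ℝ) : ℂ) • vecZ u

lemma vecZ_norm_pos {u : V3} (h : Pos u) : 0 < ‖vecZ u‖ := by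
  rcases h with ⟨h1, h2⟩
  rw [norm_pos_iff]
  intro h0
  have := inner_vecZ u u
  rw [h0, inner_zero_left] at this
  have hev : evZ (dotZ u u) = ((dotZ u u).1 : ℝ) := by simp [evZ, h2]
  rw [hev] at this
  have : ((dotZ u u).1 : ℝ) = 0 := by exact_mod_cast this.symm
  have : (dotZ u u).1 = 0 := by exact_mod_cast this
  omega

lemma uvec_norm {u : V3} (h : Pos u) : ‖uvec u‖ = 1 := by
  have hp := vecZ_norm_pos h
  rw [uvec, norm_smul]
  simp [abs_of_nonneg (le_of_lt (inv_pos.mpr hp))]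
  exact inv_mul_cancel₀ (ne_of_gt hp)

lemma inner_uvec (u v : V3) :
    ⟪uvec u, uvec v⟫_ℂ =
      ((‖vecZ u‖⁻¹ : ℝ) : ℂ) * ((‖vecZ v‖⁻¹ : ℝ) : ℂ) * ((evZ (dotZ u v) : ℝ) : ℂ) := by
  rw [uvec, uvec, inner_smul_left, inner_smul_right, inner_vecZ, Complex.conj_ofReal]
  ring

lemma inner_uvec_zero {u v : V3} (h : dotZ u v = (0, 0)) :
    ⟪uvec u, uvec v⟫_ℂ = 0 := by
  rw [inner_uvec, h]
  simp [evZ]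

lemma inner_uvec_self {u : V3} (h : Pos u) : ⟪uvec u, uvec u⟫_ℂ = 1 := by
  rw [inner_self_eq_norm_sq_to_K, uvec_norm h]
  norm_num

end KSZ

def peresData : List ((Int×Int)×(Int×Int)×(Int×Int)) := [
  ((0,0),(0,0),(1,0)),
  ((0,0),(0,1),(-1,0)),
  ((0,0),(0,1),(1,0)),
  ((0,0),(1,0),(-1,0)),
  ((0,0),(1,0),(0,-1)),
  ((0,0),(1,0),(0,0)),
  ((0,0),(1,0),(0,1)),
  ((0,0),(1,0),(1,0)),
  ((0,1),(-1,0),(-1,0)),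
  ((0,1),(-1,0),(0,0)),
  ((0,1),(-1,0),(1,0)),
  ((0,1),(0,0),(-1,0)),
  ((0,1),(0,0),(1,0)),
  ((0,1),(1,0),(-1,0)),
  ((0,1),(1,0),(0,0)),
  ((0,1),(1,0),(1,0)),
  ((1,0),(-1,0),(0,-1)),
  ((1,0),(-1,0),(0,0)),
  ((1,0),(-1,0),(0,1)),
  ((1,0),(0,-1),(-1,0)),
  ((1,0),(0,-1),(0,0)),
  ((1,0),(0,-1),(1,0)),
  ((1,0),(0,0),(-1,0)),
  ((1,0),(0,0),(0,-1)),
  ((1,0),(0,0),(0,0)),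
  ((1,0),(0,0),(0,1)),
  ((1,0),(0,0),(1,0)),
  ((1,0),(0,1),(-1,0)),
  ((1,0),(0,1),(0,0)),
  ((1,0),(0,1),(1,0)),
  ((1,0),(1,0),(0,-1)),
  ((1,0),(1,0),(0,0)),
  ((1,0),(1,0),(0,1))
]
def peresPairs : List (Nat×Nat) := [(0, 5), (0, 9), (0, 14), (0, 17), (0, 20), (0, 24), (0, 28), (0, 31), (1, 6), (1, 16), (1, 24), (1, 32), (2, 4), (2, 18), (2, 24), (2, 30), (3, 7), (3, 8), (3, 15), (3, 24), (4, 19), (4, 24), (4, 29), (5, 11), (5, 12), (5, 22), (5, 23), (5, 24), (5, 25), (5, 26), (6, 21), (6, 24), (6, 27), (7, 10), (7, 13), (7, 24), (8, 15), (8, 25), (8, 28), (9, 27), (9, 28), (9, 29), (10, 13), (10, 23), (10, 28), (11, 18), (11, 25), (11, 32), (12, 16), (12, 23), (12, 30), (13, 20), (13, 25), (14, 19), (14, 20), (14, 21), (15, 20), (15, 23), (16, 18), (16, 31), (17, 30), (17, 31), (17, 32), (18, 31), (19, 26), (19, 27), (21, 22), (21, 29), (22, 26), (22, 29), (26, 27),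 (30, 32)]
def peresSteps : List ((Nat×Nat×Nat) × List (Nat×Nat)) := [
  ((5,22,26), [(5, 22), (5, 26), (22, 26)]),
  ((0,9,28), [(0, 5), (0, 9), (0, 28), (9, 28)]),
  ((0,14,20), [(0, 5), (0, 9), (0, 14), (0, 20), (0, 28), (14, 20)]),
  ((1,6,24), [(0, 24), (1, 6), (1, 24), (5, 24), (6, 24)]),
  ((21,22,29), [(5, 22), (6, 21), (9, 29), (14, 21), (21, 22), (21, 29), (22, 26), (22, 29)]),
  ((19,26,27), [(5, 26), (6, 27), (9, 27), (14, 19), (19, 26), (19, 27), (22, 26), (26, 27)]),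
  ((0,5,24), [(0, 5), (0, 9), (0, 14), (0, 20), (0, 24), (0, 28), (1, 24), (5, 22), (5, 24), (5, 26), (6, 24)]),
  ((2,4,24), [(0, 24), (1, 24), (2, 4), (2, 24), (4, 19), (4, 24), (4, 29), (5, 24), (6, 24)]),
  ((0,17,31), [(0, 5), (0, 9), (0, 14), (0, 17), (0, 20), (0, 24), (0, 28), (0, 31), (17, 31)]),
  ((17,30,32), [(0, 17), (1, 32), (2, 30), (17, 30), (17, 31), (17, 32), (30, 32)]),
  ((7,10,13), [(7, 10), (7, 13), (7, 24), (10, 13), (10, 28), (13, 20)]),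
  ((16,18,31), [(0, 31), (1, 16), (2, 18), (16, 18), (16, 31), (17, 31), (18, 31)]),
  ((5,12,23), [(0, 5), (5, 12), (5, 22), (5, 23), (5, 24), (5, 26), (10, 23), (12, 16), (12, 23), (12, 30)]),
  ((3,8,15), [(3, 7), (3, 8), (3, 15), (3, 24), (8, 15), (8, 28), (15, 20), (15, 23)]),
  ((3,7,24), [(0, 24), (1, 24), (2, 24), (3, 7), (3, 8), (3, 15), (3, 24), (4, 24), (5, 24), (6, 24), (7, 10), (7, 13), (7, 24)]),
  ((5,11,25), [(0, 5), (5, 11), (5, 12), (5, 22), (5, 23), (5, 24), (5, 25), (5, 26), (8, 25), (11, 18), (11, 25), (11, 32), (13, 25)])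
]

set_option maxHeartbeats 10000000 in
theorem peres_unsat_comp : KSSolver.solve peresSteps [] = false := by rfl

open KSZ
open scoped Classical

lemma orthonormal_triple {E : Type*} [NormedAddCommGroup E] [InnerProductSpace ℂ E]
    {a b c : E} (h11 : ⟪a,a⟫_ℂ = 1) (h22 : ⟪b,b⟫_ℂ = 1) (h33 : ⟪c,c⟫_ℂ = 1)
    (h12 : ⟪a,b⟫_ℂ = 0) (h13 : ⟪a,c⟫_ℂ = 0) (h21 : ⟪b,a⟫_ℂ = 0)
    (h23 : ⟪b,c⟫_ℂ = 0) (h31 : ⟪c,a⟫_ℂ = 0) (h32 : ⟪c,b⟫_ℂ = 0) :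
    Orthonormal ℂ ![a, b, c] := by
  rw [orthonormal_iff_ite]
  intro i j
  fin_cases i <;> fin_cases j <;>
    simp [Matrix.cons_val_zero, Matrix.cons_val_one, Matrix.head_cons,
      h11, h22, h33, h12, h13, h21, h23, h31, h32] <;> simp_all

noncomputable def pv (i : ℕ) : V3 := peresData.getD i ((0,0),(0,0),(0,0))
noncomputable def uvecN (i : ℕ) : EuclideanSpace ℂ (Fin 3) := uvec (pv i)

lemma dotZ_comm (u v : V3) : dotZ u v = dotZ v u := by
  simp only [dotZ, z2mul, z2add, Prod.mk.injEq]
  constructor <;> ring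

theorem factA : ∀ u ∈ peresData, Pos u := by
  simp only [Pos]; decide
theorem factB : ∀ st ∈ peresSteps,
    pv st.1.1 ∈ peresData ∧ pv st.1.2.1 ∈ peresData ∧ pv st.1.2.2 ∈ peresData := by decide
theorem factC : ∀ st ∈ peresSteps,
    dotZ (pv st.1.1) (pv st.1.2.1) = (0,0) ∧ dotZ (pv st.1.1) (pv st.1.2.2) = (0,0) ∧
      dotZ (pv st.1.2.1) (pv st.1.2.2) = (0,0) := by decide
theorem factD : ∀ st ∈ peresSteps, ∀ p ∈ st.2,
    dotZ (pv p.1) (pv p.2) = (0,0) ∧ pv p.1 ∈ peresData ∧ pv p.2 ∈ peresData := by decide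

lemma euHelper {A B C : Prop} (h : ∃! k : Fin 3, ![A, B, C] k) :
    (A ∧ ¬B ∧ ¬C) ∨ (¬A ∧ B ∧ ¬C) ∨ (¬A ∧ ¬B ∧ C) := by
  obtain ⟨k, hk, hu⟩ := h
  fin_cases k
  · left
    refine ⟨by simpa using hk, fun hB => ?_, fun hC => ?_⟩
    · have := hu 1 (by simpa using hB); exact absurd this (by decide)
    · have := hu 2 (by simpa using hC); exact absurd this (by decide)
  · right; left
    refine ⟨fun hA => ?_, by simpa using hk, fun hC => ?_⟩
    · have := hu 0 (by simpa using hA); exact absurd this (by decide)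
    · have := hu 2 (by simpa using hC); exact absurd this (by decide)
  · right; right
    refine ⟨fun hA => ?_, fun hB => ?_, by simpa using hk⟩
    · have := hu 0 (by simpa using hA); exact absurd this (by decide)
    · have := hu 1 (by simpa using hB); exact absurd this (by decide)

structure KSW (m : ℕ) : Type where
  S : Finset (EuclideanSpace ℂ (Fin m))
  bases : List (Fin m → EuclideanSpace ℂ (Fin m))
  nonempty : bases ≠ []
  unit : ∀ v ∈ S, ‖v‖ = 1
  bases_on : ∀ β ∈ bases, Orthonormal ℂ β
  bases_sub : ∀ β ∈ bases, ∀ k, β k ∈ S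
  uncol : ∀ c : EuclideanSpace ℂ (Fin m) → Prop,
    (∀ β ∈ bases, ∃! k : Fin m, c (β k)) →
    (∀ v ∈ S, ∀ w ∈ S, ⟪v, w⟫_ℂ = 0 → ¬(c v ∧ c w)) → False

noncomputable def peresKSW : KSW 3 where
  S := (peresData.map uvec).toFinset
  bases := peresSteps.map (fun st => ![uvecN st.1.1, uvecN st.1.2.1, uvecN st.1.2.2])
  nonempty := by
    have h : peresSteps ≠ [] := by decide
    simpa using h
  unit := by
    intro v hv
    rw [List.mem_toFinset, List.mem_map] at hv
    obtain ⟨u, hu, rfl⟩ := hv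
    exact uvec_norm (factA u hu)
  bases_on := by
    intro β hβ
    rw [List.mem_map] at hβ
    obtain ⟨st, hst, rfl⟩ := hβ
    obtain ⟨m1, m2, m3⟩ := factB st hst
    obtain ⟨d1, d2, d3⟩ := factC st hst
    have p1 := factA _ m1
    have p2 := factA _ m2
    have p3 := factA _ m3
    have c1 : dotZ (pv st.1.2.1) (pv st.1.1) = (0,0) := dotZ_comm _ _ ▸ d1
    have c2 : dotZ (pv st.1.2.2) (pv st.1.1) = (0,0) := dotZ_comm _ _ ▸ d2
    have c3 : dotZ (pv st.1.2.2) (pv st.1.2.1) = (0,0) := dotZ_comm _ _ ▸ d3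
    exact orthonormal_triple (inner_uvec_self p1) (inner_uvec_self p2) (inner_uvec_self p3)
      (inner_uvec_zero d1) (inner_uvec_zero d2) (inner_uvec_zero c1)
      (inner_uvec_zero d3) (inner_uvec_zero c2) (inner_uvec_zero c3)
  bases_sub := by
    intro β hβ k
    rw [List.mem_map] at hβ
    obtain ⟨st, hst, rfl⟩ := hβ
    obtain ⟨m1, m2, m3⟩ := factB st hst
    have g1 : uvecN st.1.1 ∈ (peresData.map uvec).toFinset := by
      rw [List.mem_toFinset]; exact List.mem_map_of_mem (f := uvec) m1
    have g2 : uvecN st.1.2.1 ∈ (peresData.map uvec).toFinset := by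
      rw [List.mem_toFinset]; exact List.mem_map_of_mem (f := uvec) m2
    have g3 : uvecN st.1.2.2 ∈ (peresData.map uvec).toFinset := by
      rw [List.mem_toFinset]; exact List.mem_map_of_mem (f := uvec) m3
    fin_cases k
    · exact g1
    · exact g2
    · exact g3
  uncol := by
    intro c h1 h2
    classical
    refine KSSolver.unsat peres_unsat_comp ⟨fun i => decide (c (uvecN i)), ?_, ?_⟩
    · intro st hst
      have hβ : (![uvecN st.1.1, uvecN st.1.2.1, uvecN st.1.2.2])
          ∈ peresSteps.map (fun st => ![uvecN st.1.1, uvecN st.1.2.1, uvecN st.1.2.2]) :=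
        List.mem_map_of_mem hst
      have h := h1 _ hβ
      have h' : ∃! k : Fin 3,
          ![c (uvecN st.1.1), c (uvecN st.1.2.1), c (uvecN st.1.2.2)] k := by
        refine (existsUnique_congr ?_).mp h
        intro k; fin_cases k <;> simp
      rcases euHelper h' with ⟨hA, hB, hC⟩ | ⟨hA, hB, hC⟩ | ⟨hA, hB, hC⟩
      · exact ⟨0, by norm_num, by simp [hA], by simp [hB], by simp [hC]⟩
      · exact ⟨1, by norm_num, by simp [hA], by simp [hB], by simp [hC]⟩
      · exact ⟨2, by norm_num, by simp [hA], by simp [hB], by simp [hC]⟩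
    · intro st hst p hp
      obtain ⟨hd, hm1, hm2⟩ := factD st hst p hp
      have horth : ⟪uvecN p.1, uvecN p.2⟫_ℂ = 0 := inner_uvec_zero hd
      have hv1 : uvecN p.1 ∈ (peresData.map uvec).toFinset := by
        rw [List.mem_toFinset]; exact List.mem_map_of_mem (f := uvec) hm1
      have hv2 : uvecN p.2 ∈ (peresData.map uvec).toFinset := by
        rw [List.mem_toFinset]; exact List.mem_map_of_mem (f := uvec) hm2
      have := h2 _ hv1 _ hv2 horth
      rintro ⟨ha, hb⟩
      exact this ⟨of_decide_eq_true ha, of_decide_eq_true hb⟩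

abbrev Evec (m : ℕ) := EuclideanSpace ℂ (Fin m)

namespace Step

variable {m : ℕ}

noncomputable def low (v : Evec m) : Evec (m+1) :=
  WithLp.toLp 2 (fun i : Fin (m+1) => (Fin.lastCases 0 (fun j => v j) i : ℂ))
noncomputable def hig (v : Evec m) : Evec (m+1) :=
  WithLp.toLp 2 (fun i : Fin (m+1) => (Fin.cases 0 (fun j => v j) i : ℂ))
noncomputable def elast : Evec (m+1) := EuclideanSpace.single (Fin.last m) 1
noncomputable def e0 : Evec (m+1) := EuclideanSpace.single 0 1

@[simp] lemma low_castSucc (v : Evec m) (j : Fin m) : low v (Fin.castSucc j) = v j := by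
  simp [low]
@[simp] lemma low_last (v : Evec m) : low v (Fin.last m) = 0 := by simp [low]
@[simp] lemma hig_zero (v : Evec m) : hig v 0 = 0 := by simp [hig]
@[simp] lemma hig_succ (v : Evec m) (j : Fin m) : hig v (Fin.succ j) = v j := by simp [hig]

lemma inner_low (v w : Evec m) : ⟪low v, low w⟫_ℂ = ⟪v, w⟫_ℂ := by
  simp only [PiLp.inner_apply, RCLike.inner_apply]
  rw [Fin.sum_univ_castSucc]
  simp

lemma inner_hig (v w : Evec m) : ⟪hig v, hig w⟫_ℂ = ⟪v, w⟫_ℂ := by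
  simp only [PiLp.inner_apply, RCLike.inner_apply]
  rw [Fin.sum_univ_succ]
  simp

lemma norm_eq_of_inner {E F : Type*} [NormedAddCommGroup E] [InnerProductSpace ℂ E]
    [NormedAddCommGroup F] [InnerProductSpace ℂ F]
    {x : E} {y : F} (h : ⟪x, x⟫_ℂ = ⟪y, y⟫_ℂ) : ‖x‖ = ‖y‖ := by
  have hx := inner_self_eq_norm_mul_norm (𝕜 := ℂ) x
  have hy := inner_self_eq_norm_mul_norm (𝕜 := ℂ) y
  rw [h, hy] at hx
  rcases mul_self_eq_mul_self_iff.mp hx.symm with h1 | h1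
  · exact h1
  · have hy0 : ‖y‖ = 0 := by nlinarith [norm_nonneg x, norm_nonneg y]
    have hx0 : ‖x‖ = 0 := by rw [h1, hy0]; ring
    rw [hx0, hy0]

lemma norm_low (v : Evec m) : ‖low v‖ = ‖v‖ := norm_eq_of_inner (inner_low v v)
lemma norm_hig (v : Evec m) : ‖hig v‖ = ‖v‖ := norm_eq_of_inner (inner_hig v v)

lemma norm_eq_one_of_inner {E : Type*} [NormedAddCommGroup E] [InnerProductSpace ℂ E]
    {x : E} (h : ⟪x, x⟫_ℂ = 1) : ‖x‖ = 1 := by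
  have hx := inner_self_eq_norm_mul_norm (𝕜 := ℂ) x
  rw [h] at hx
  have hx' : ‖x‖ * ‖x‖ = 1 := by simpa using hx.symm
  rcases mul_self_eq_one_iff.mp hx' with h1 | h1
  · exact h1
  · nlinarith [norm_nonneg x]

@[simp] lemma inner_elast_self : ⟪(elast : Evec (m+1)), elast⟫_ℂ = 1 := by
  rw [elast, EuclideanSpace.inner_single_left]
  simp [EuclideanSpace.single_apply]
@[simp] lemma inner_e0_self : ⟪(e0 : Evec (m+1)), e0⟫_ℂ = 1 := by
  rw [e0, EuclideanSpace.inner_single_left]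
  simp [EuclideanSpace.single_apply]
lemma norm_elast : ‖(elast : Evec (m+1))‖ = 1 := norm_eq_one_of_inner inner_elast_self
lemma norm_e0 : ‖(e0 : Evec (m+1))‖ = 1 := norm_eq_one_of_inner inner_e0_self

@[simp] lemma inner_low_elast (v : Evec m) : ⟪low v, elast⟫_ℂ = 0 := by
  rw [elast, EuclideanSpace.inner_single_right]; simp
@[simp] lemma inner_elast_low (v : Evec m) : ⟪(elast : Evec (m+1)), low v⟫_ℂ = 0 := by
  rw [elast, EuclideanSpace.inner_single_left]; simp
@[simp] lemma inner_hig_e0 (v : Evec m) : ⟪hig v, e0⟫_ℂ = 0 := by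
  rw [e0, EuclideanSpace.inner_single_right]; simp
@[simp] lemma inner_e0_hig (v : Evec m) : ⟪(e0 : Evec (m+1)), hig v⟫_ℂ = 0 := by
  rw [e0, EuclideanSpace.inner_single_left]; simp

lemma inner_e0_elast (hm : 0 < m) : ⟪(e0 : Evec (m+1)), elast⟫_ℂ = 0 := by
  rw [e0, elast, EuclideanSpace.inner_single_left, EuclideanSpace.single_apply]
  rw [if_neg]
  · simp
  · intro h
    have := congrArg Fin.val h
    simp [Fin.last] at this
    omega

noncomputable def basL (β : Fin m → Evec m) : Fin (m+1) → Evec (m+1) :=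
  Fin.snoc (fun j => low (β j)) elast
noncomputable def basH (β : Fin m → Evec m) : Fin (m+1) → Evec (m+1) :=
  Fin.cons e0 (fun j => hig (β j))

lemma basL_on {β : Fin m → Evec m} (hβ : Orthonormal ℂ β) : Orthonormal ℂ (basL β) := by
  rw [orthonormal_iff_ite] at hβ ⊢
  intro i j
  induction i using Fin.lastCases with
  | last =>
    induction j using Fin.lastCases with
    | last =>
      simp only [basL, Fin.snoc_last]
      rw [inner_elast_self]; simp
    | cast j =>
      simp only [basL, Fin.snoc_last, Fin.snoc_castSucc]
      rw [inner_elast_low, if_neg (Fin.castSucc_lt_last j).ne']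
  | cast i =>
    induction j using Fin.lastCases with
    | last =>
      simp only [basL, Fin.snoc_last, Fin.snoc_castSucc]
      rw [inner_low_elast, if_neg (Fin.castSucc_lt_last i).ne]
    | cast j =>
      simp only [basL, Fin.snoc_castSucc]
      rw [inner_low, hβ i j]
      simp [Fin.castSucc_inj]

lemma basH_on {β : Fin m → Evec m} (hβ : Orthonormal ℂ β) : Orthonormal ℂ (basH β) := by
  rw [orthonormal_iff_ite] at hβ ⊢
  intro i j
  induction i using Fin.cases with
  | zero =>
    induction j using Fin.cases with
    | zero =>
      simp only [basH, Fin.cons_zero]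
      rw [inner_e0_self]; simp
    | succ j =>
      simp only [basH, Fin.cons_zero, Fin.cons_succ]
      rw [inner_e0_hig, if_neg (Ne.symm (Fin.succ_ne_zero j))]
  | succ i =>
    induction j using Fin.cases with
    | zero =>
      simp only [basH, Fin.cons_zero, Fin.cons_succ]
      rw [inner_hig_e0, if_neg (Fin.succ_ne_zero i)]
    | succ j =>
      simp only [basH, Fin.cons_succ]
      rw [inner_hig, hβ i j]
      simp [Fin.succ_inj]

noncomputable def stepKSW (hm : 0 < m) (W : KSW m) : KSW (m+1) where
  S := (W.S.image low ∪ W.S.image hig) ∪ {e0, elast}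
  bases := W.bases.map basL ++ W.bases.map basH
  nonempty := by
    intro h
    rcases List.append_eq_nil_iff.mp h with ⟨h1, _⟩
    exact W.nonempty (List.map_eq_nil_iff.mp h1)
  unit := by
    intro v hv
    simp only [Finset.mem_union, Finset.mem_image, Finset.mem_insert,
      Finset.mem_singleton] at hv
    rcases hv with (⟨w, hw, rfl⟩ | ⟨w, hw, rfl⟩) | (rfl | rfl)
    · rw [norm_low]; exact W.unit w hw
    · rw [norm_hig]; exact W.unit w hw
    · exact norm_e0
    · exact norm_elast
  bases_on := by
    intro β hβ
    rcases List.mem_append.mp hβ with h | h <;> rw [List.mem_map] at h <;>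
      obtain ⟨γ, hγ, rfl⟩ := h
    · exact basL_on (W.bases_on γ hγ)
    · exact basH_on (W.bases_on γ hγ)
  bases_sub := by
    intro β hβ k
    simp only [Finset.mem_union, Finset.mem_image, Finset.mem_insert,
      Finset.mem_singleton]
    rcases List.mem_append.mp hβ with h | h <;> rw [List.mem_map] at h <;>
      obtain ⟨γ, hγ, rfl⟩ := h
    · induction k using Fin.lastCases with
      | last => right; right; simp [basL]
      | cast j =>
        left; left
        exact ⟨γ j, W.bases_sub γ hγ j, by simp [basL]⟩
    · induction k using Fin.cases with
      | zero => right; left; simp [basH]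
      | succ j =>
        left; right
        exact ⟨γ j, W.bases_sub γ hγ j, by simp [basH]⟩
  uncol := by
    intro c h1 h2
    have meml : ∀ v ∈ W.S, low v ∈ (W.S.image low ∪ W.S.image hig) ∪ {e0, elast} := by
      intro v hv
      exact Finset.mem_union_left _ (Finset.mem_union_left _ (Finset.mem_image_of_mem _ hv))
    have memh : ∀ v ∈ W.S, hig v ∈ (W.S.image low ∪ W.S.image hig) ∪ {e0, elast} := by
      intro v hv
      exact Finset.mem_union_left _ (Finset.mem_union_right _ (Finset.mem_image_of_mem _ hv))
    have meme0 : (e0 : Evec (m+1)) ∈ (W.S.image low ∪ W.S.image hig) ∪ {e0, elast} :=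
      Finset.mem_union_right _ (by simp)
    have memel : (elast : Evec (m+1)) ∈ (W.S.image low ∪ W.S.image hig) ∪ {e0, elast} :=
      Finset.mem_union_right _ (by simp)
    by_cases hL : c elast
    · by_cases hH : c e0
      · exact h2 e0 meme0 elast memel (inner_e0_elast hm) ⟨hH, hL⟩
      · refine W.uncol (fun v => c (hig v)) ?_ ?_
        · intro β hβ
          have h := h1 (basH β) (List.mem_append.mpr (Or.inr (List.mem_map_of_mem hβ)))
          obtain ⟨k, hk, hu⟩ := h
          rcases Fin.eq_zero_or_eq_succ k with rfl | ⟨j, rfl⟩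
          · exact absurd (by simpa [basH] using hk) hH
          · refine ⟨j, by simpa [basH] using hk, ?_⟩
            intro j' hj'
            have := hu (Fin.succ j') (by simpa [basH] using hj')
            exact Fin.succ_injective _ this
        · intro v hv w hw hvw
          exact h2 (hig v) (memh v hv) (hig w) (memh w hw) (by rw [inner_hig]; exact hvw)
    · refine W.uncol (fun v => c (low v)) ?_ ?_
      · intro β hβ
        have h := h1 (basL β) (List.mem_append.mpr (Or.inl (List.mem_map_of_mem hβ)))
        obtain ⟨k, hk, hu⟩ := h
        induction k using Fin.lastCases with
        | last => exact absurd (by simpa [basL] using hk) hL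
        | cast j =>
          refine ⟨j, by simpa [basL] using hk, ?_⟩
          intro j' hj'
          have := hu (Fin.castSucc j') (by simpa [basL] using hj')
          exact Fin.castSucc_injective _ this
      · intro v hv w hw hvw
        exact h2 (low v) (meml v hv) (low w) (meml w hw) (by rw [inner_low]; exact hvw)

end Step


namespace Tens

lemma norm_eq_one_of_inner' {E : Type*} [NormedAddCommGroup E] [InnerProductSpace ℂ E]
    {x : E} (h : ⟪x, x⟫_ℂ = 1) : ‖x‖ = 1 := by
  have hx := inner_self_eq_norm_mul_norm (𝕜 := ℂ) x
  rw [h] at hx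
  have hx' : ‖x‖ * ‖x‖ = 1 := by simpa using hx.symm
  rcases mul_self_eq_one_iff.mp hx' with h1 | h1
  · exact h1
  · nlinarith [norm_nonneg x]

variable {n : ℕ} {d : Fin n → ℕ}

lemma inner_tensD (ψ χ : (j : Fin n) → EuclideanSpace ℂ (Fin (d j))) :
    ⟪tensD ψ, tensD χ⟫_ℂ = ∏ j, ⟪ψ j, χ j⟫_ℂ := by
  calc ⟪tensD ψ, tensD χ⟫_ℂ
      = ∑ f : (j : Fin n) → Fin (d j),
          (starRingEnd ℂ) (∏ j, ψ j (f j)) * ∏ j, χ j (f j) := by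
        simp [PiLp.inner_apply, RCLike.inner_apply, tensD, mul_comm]
    _ = ∑ f : (j : Fin n) → Fin (d j),
          ∏ j, (starRingEnd ℂ) (ψ j (f j)) * χ j (f j) := by
        refine Finset.sum_congr rfl fun f _ => ?_
        rw [map_prod, Finset.prod_mul_distrib]
    _ = ∏ j, ∑ k : Fin (d j), (starRingEnd ℂ) (ψ j k) * χ j k := by
        rw [Finset.prod_univ_sum, Fintype.piFinset_univ]
    _ = ∏ j, ⟪ψ j, χ j⟫_ℂ := by
        simp [PiLp.inner_apply, RCLike.inner_apply, mul_comm]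

lemma norm_tensD_one {ψ : (j : Fin n) → EuclideanSpace ℂ (Fin (d j))}
    (h : ∀ j, ‖ψ j‖ = 1) : ‖tensD ψ‖ = 1 := by
  refine norm_eq_one_of_inner' ?_
  rw [inner_tensD]
  refine Finset.prod_eq_one fun j _ => ?_
  rw [inner_self_eq_norm_sq_to_K, h j]
  norm_num

noncomputable def std (j : Fin n) (k : Fin (d j)) : EuclideanSpace ℂ (Fin (d j)) :=
  EuclideanSpace.single k 1

lemma std_inner (j : Fin n) (a b : Fin (d j)) :
    ⟪std j a, std j b⟫_ℂ = if a = b then 1 else 0 := by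
  rw [std, std, EuclideanSpace.inner_single_left, EuclideanSpace.single_apply]
  simp [eq_comm]

lemma std_on (j : Fin n) : Orthonormal ℂ (std (d := d) j) := by
  rw [orthonormal_iff_ite]
  exact std_inner j

lemma std_unit (j : Fin n) (k : Fin (d j)) : ‖std j k‖ = 1 :=
  norm_eq_one_of_inner' (by rw [std_inner]; simp)

variable (j₀ : Fin n)

noncomputable def P (v : EuclideanSpace ℂ (Fin (d j₀))) (x : (j : Fin n) → Fin (d j)) :
    EuclideanSpace ℂ ((j : Fin n) → Fin (d j)) :=
  tensD (Function.update (fun j => std j (x j)) j₀ v)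

lemma inner_P (v w : EuclideanSpace ℂ (Fin (d j₀))) (x y : (j : Fin n) → Fin (d j)) :
    ⟪P j₀ v x, P j₀ w y⟫_ℂ =
      ⟪v, w⟫_ℂ * ∏ j ∈ Finset.univ.erase j₀, (if x j = y j then (1:ℂ) else 0) := by
  rw [P, P, inner_tensD, ← Finset.mul_prod_erase Finset.univ _ (Finset.mem_univ j₀)]
  congr 1
  · rw [Function.update_self, Function.update_self]
  · refine Finset.prod_congr rfl fun j hj => ?_
    have hne : j ≠ j₀ := (Finset.mem_erase.mp hj).1
    rw [Function.update_of_ne hne, Function.update_of_ne hne, std_inner]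

lemma inner_P_agree {v w : EuclideanSpace ℂ (Fin (d j₀))} {x y : (j : Fin n) → Fin (d j)}
    (h : ∀ j, j ≠ j₀ → x j = y j) : ⟪P j₀ v x, P j₀ w y⟫_ℂ = ⟪v, w⟫_ℂ := by
  rw [inner_P]
  have : ∏ j ∈ Finset.univ.erase j₀, (if x j = y j then (1:ℂ) else 0) = 1 :=
    Finset.prod_eq_one fun j hj => by rw [if_pos (h j (Finset.mem_erase.mp hj).1)]
  rw [this, mul_one]

lemma inner_P_disagree {v w : EuclideanSpace ℂ (Fin (d j₀))} {x y : (j : Fin n) → Fin (d j)}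
    {j₁ : Fin n} (hj₁ : j₁ ≠ j₀) (hne : x j₁ ≠ y j₁) :
    ⟪P j₀ v x, P j₀ w y⟫_ℂ = 0 := by
  rw [inner_P]
  have : ∏ j ∈ Finset.univ.erase j₀, (if x j = y j then (1:ℂ) else 0) = 0 :=
    Finset.prod_eq_zero (Finset.mem_erase.mpr ⟨hj₁, Finset.mem_univ j₁⟩) (if_neg hne)
  rw [this, mul_zero]

lemma P_congr {v : EuclideanSpace ℂ (Fin (d j₀))} {x y : (j : Fin n) → Fin (d j)}
    (h : ∀ j, j ≠ j₀ → x j = y j) : P j₀ v x = P j₀ v y := by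
  have hupd : Function.update (fun j => std (d := d) j (x j)) j₀ v =
      Function.update (fun j => std (d := d) j (y j)) j₀ v := by
    funext j
    by_cases hj : j = j₀
    · subst hj; rw [Function.update_self, Function.update_self]
    · rw [Function.update_of_ne hj, Function.update_of_ne hj, h j hj]
  rw [P, P, hupd]

lemma P_unit {v : EuclideanSpace ℂ (Fin (d j₀))} (hv : ‖v‖ = 1)
    (x : (j : Fin n) → Fin (d j)) : ‖P j₀ v x‖ = 1 := by
  refine norm_tensD_one fun j => ?_
  by_cases hj : j = j₀
  · subst hj; rw [Function.update_self]; exact hv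
  · rw [Function.update_of_ne hj]; exact std_unit j (x j)

lemma inner_P_self_eq_one {v : EuclideanSpace ℂ (Fin (d j₀))} (hv : ‖v‖ = 1)
    (x : (j : Fin n) → Fin (d j)) : ⟪P j₀ v x, P j₀ v x⟫_ℂ = 1 := by
  rw [inner_P_agree j₀ (fun _ _ => rfl), inner_self_eq_norm_sq_to_K, hv]
  norm_num

lemma agree_of_inner_ne_zero {v w : EuclideanSpace ℂ (Fin (d j₀))}
    {x y : (j : Fin n) → Fin (d j)} (h : ⟪P j₀ v x, P j₀ w y⟫_ℂ ≠ 0) :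
    ∀ j, j ≠ j₀ → x j = y j := by
  by_contra hc
  push_neg at hc
  obtain ⟨j₁, hj₁, hne⟩ := hc
  exact h (inner_P_disagree j₀ hj₁ hne)

lemma agree_of_P_eq {v w : EuclideanSpace ℂ (Fin (d j₀))}
    {x y : (j : Fin n) → Fin (d j)} (hv : ‖v‖ = 1) (h : P j₀ v x = P j₀ w y) :
    ∀ j, j ≠ j₀ → x j = y j := by
  refine agree_of_inner_ne_zero (v := v) (w := w) j₀ ?_
  rw [← h, inner_P_self_eq_one j₀ hv]
  exact one_ne_zero



section Main

variable (W : KSW (d j₀))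

noncomputable def bigS : Finset (EuclideanSpace ℂ ((j : Fin n) → Fin (d j))) :=
  Finset.image (fun p : EuclideanSpace ℂ (Fin (d j₀)) × ((j : Fin n) → Fin (d j)) =>
    P j₀ p.1 p.2) (W.S ×ˢ Finset.univ)

lemma mem_bigS {v : EuclideanSpace ℂ (Fin (d j₀))} (hv : v ∈ W.S)
    (x : (j : Fin n) → Fin (d j)) : P j₀ v x ∈ bigS j₀ W := by
  rw [bigS, Finset.mem_image]
  exact ⟨(v, x), Finset.mem_product.mpr ⟨hv, Finset.mem_univ x⟩, rfl⟩

noncomputable def Bβ (β : Fin (d j₀) → EuclideanSpace ℂ (Fin (d j₀))) :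
    Finset (EuclideanSpace ℂ ((j : Fin n) → Fin (d j))) :=
  Finset.image (fun x : (j : Fin n) → Fin (d j) => P j₀ (β (x j₀)) x) Finset.univ

lemma Bβ_sub {β : Fin (d j₀) → EuclideanSpace ℂ (Fin (d j₀))}
    (hβ : ∀ k, β k ∈ W.S) :
    (Bβ j₀ β : Set (EuclideanSpace ℂ ((j : Fin n) → Fin (d j)))) ⊆ ↑(bigS j₀ W) := by
  intro v hv
  rw [Finset.mem_coe, Bβ, Finset.mem_image] at hv
  obtain ⟨x, _, rfl⟩ := hv
  exact Finset.mem_coe.mpr (mem_bigS j₀ W (hβ (x j₀)) x)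

lemma Bβ_isDPB {β : Fin (d j₀) → EuclideanSpace ℂ (Fin (d j₀))}
    (hβon : Orthonormal ℂ β) : IsDirectProductBasis (Bβ j₀ β) := by
  refine ⟨Function.update (fun j => std (d := d) j) j₀ β, ?_, ?_⟩
  · intro j
    by_cases hj : j = j₀
    · subst hj; rw [Function.update_self]; exact hβon
    · rw [Function.update_of_ne hj]; exact std_on j
  · have hfun : ∀ x : (j : Fin n) → Fin (d j),
        P j₀ (β (x j₀)) x =
          tensD (fun j => Function.update (fun j => std (d := d) j) j₀ β j (x j)) := by
      intro x
      have harg : Function.update (fun j => std (d := d) j (x j)) j₀ (β (x j₀)) =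
          fun j => Function.update (fun j => std (d := d) j) j₀ β j (x j) := by
        funext j
        by_cases hj : j = j₀
        · subst hj; rw [Function.update_self, Function.update_self]
        · rw [Function.update_of_ne hj, Function.update_of_ne hj]
      simp only [P]
      rw [harg]
    rw [Bβ, Finset.coe_image, Finset.coe_univ, Set.image_univ]
    ext v
    simp only [Set.mem_range]
    constructor
    · rintro ⟨x, rfl⟩; exact ⟨x, (hfun x).symm⟩
    · rintro ⟨x, rfl⟩; exact ⟨x, (hfun x)⟩

lemma g_inj {β : Fin (d j₀) → EuclideanSpace ℂ (Fin (d j₀))}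
    (hβon : Orthonormal ℂ β) (hβ : ∀ k, β k ∈ W.S) :
    Function.Injective (fun x : (j : Fin n) → Fin (d j) => P j₀ (β (x j₀)) x) := by
  intro x y hxy
  simp only at hxy
  have hunit : ‖β (x j₀)‖ = 1 := W.unit _ (hβ (x j₀))
  have hagree := agree_of_P_eq j₀ hunit hxy
  have hinner : ⟪β (x j₀), β (y j₀)⟫_ℂ = 1 := by
    have h1 : ⟪P j₀ (β (x j₀)) x, P j₀ (β (y j₀)) y⟫_ℂ = ⟪β (x j₀), β (y j₀)⟫_ℂ :=
      inner_P_agree j₀ hagree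
    rw [hxy, inner_P_self_eq_one j₀ (W.unit _ (hβ (y j₀)))] at h1
    exact h1.symm
  have hkk : x j₀ = y j₀ := by
    by_contra hne
    rw [orthonormal_iff_ite.mp hβon (x j₀) (y j₀), if_neg hne] at hinner
    exact one_ne_zero hinner.symm
  funext j
  by_cases hj : j = j₀
  · subst hj; exact hkk
  · exact hagree j hj

lemma inner_Bβ {β : Fin (d j₀) → EuclideanSpace ℂ (Fin (d j₀))}
    (hβon : Orthonormal ℂ β) (x y : (j : Fin n) → Fin (d j)) :
    ⟪P j₀ (β (x j₀)) x, P j₀ (β (y j₀)) y⟫_ℂ = if x = y then 1 else 0 := by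
  by_cases hagree : ∀ j, j ≠ j₀ → x j = y j
  · rw [inner_P_agree j₀ hagree, orthonormal_iff_ite.mp hβon (x j₀) (y j₀)]
    by_cases hxy : x = y
    · rw [if_pos hxy, if_pos (by rw [hxy])]
    · rw [if_neg hxy, if_neg ?_]
      intro hk
      exact hxy (funext fun j => by
        by_cases hj : j = j₀
        · subst hj; exact hk
        · exact hagree j hj)
  · push_neg at hagree
    obtain ⟨j₁, hj₁, hne⟩ := hagree
    rw [inner_P_disagree j₀ hj₁ hne, if_neg ?_]
    intro hk
    exact hne (by rw [hk])

lemma Bβ_isONB (hd2 : ∀ j, 2 ≤ d j) {β : Fin (d j₀) → EuclideanSpace ℂ (Fin (d j₀))}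
    (hβon : Orthonormal ℂ β) (hβ : ∀ k, β k ∈ W.S) : IsONBasis (Bβ j₀ β) := by
  have hinj := g_inj j₀ W hβon hβ
  have hcoe : (Bβ j₀ β : Set (EuclideanSpace ℂ ((j : Fin n) → Fin (d j)))) =
      Set.range (fun x : (j : Fin n) → Fin (d j) => P j₀ (β (x j₀)) x) := by
    rw [Bβ, Finset.coe_image, Finset.coe_univ, Set.image_univ]
  have hite : ∀ v ∈ (Bβ j₀ β : Set (EuclideanSpace ℂ ((j : Fin n) → Fin (d j)))),
      ∀ w ∈ (Bβ j₀ β : Set (EuclideanSpace ℂ ((j : Fin n) → Fin (d j)))),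
      ⟪v, w⟫_ℂ = if v = w then 1 else 0 := by
    intro v hv w hw
    rw [Finset.mem_coe, Bβ, Finset.mem_image] at hv hw
    obtain ⟨x, _, rfl⟩ := hv
    obtain ⟨y, _, rfl⟩ := hw
    rw [inner_Bβ j₀ hβon]
    by_cases hxy : x = y
    · rw [if_pos hxy, if_pos (by rw [hxy])]
    · rw [if_neg hxy, if_neg (fun h => hxy (hinj h))]
  constructor
  · exact orthonormal_subtype_iff_ite.mpr hite
  · haveI : Nonempty ((j : Fin n) → Fin (d j)) :=
      ⟨fun j => ⟨0, by have := hd2 j; omega⟩⟩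
    have hli : LinearIndependent ℂ
        (fun x : (j : Fin n) → Fin (d j) => P j₀ (β (x j₀)) x) := by
      have : Orthonormal ℂ (fun x : (j : Fin n) → Fin (d j) => P j₀ (β (x j₀)) x) :=
        orthonormal_iff_ite.mpr (inner_Bβ j₀ hβon)
      exact this.linearIndependent
    have hspan := hli.span_eq_top_of_card_eq_finrank
      (by rw [finrank_euclideanSpace])
    rw [hcoe]
    exact hspan

theorem tensor_uncol (c : EuclideanSpace ℂ ((j : Fin n) → Fin (d j)) → Prop)
    (h1 : ∀ β ∈ W.bases, ∃! v, v ∈ Bβ j₀ β ∧ c v)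
    (h2 : ∀ v ∈ bigS j₀ W, ∀ w ∈ bigS j₀ W, ⟪v, w⟫_ℂ = 0 → ¬(c v ∧ c w)) : False := by
  -- pick the first basis and its marked element; extract the common "off-j₀" index f₀
  obtain ⟨β₁, hβ₁⟩ := List.exists_mem_of_ne_nil W.bases W.nonempty
  obtain ⟨t₁, ⟨ht₁B, ht₁c⟩, _⟩ := h1 β₁ hβ₁
  rw [Bβ, Finset.mem_image] at ht₁B
  obtain ⟨f₀, _, hf₀⟩ := ht₁B
  -- every marked element of every basis agrees with f₀ off j₀
  have hcommon : ∀ β ∈ W.bases, ∀ x : (j : Fin n) → Fin (d j),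
      c (P j₀ (β (x j₀)) x) → ∀ j, j ≠ j₀ → x j = f₀ j := by
    intro β hβ x hcx
    have hmem : P j₀ (β (x j₀)) x ∈ bigS j₀ W :=
      mem_bigS j₀ W (W.bases_sub β hβ (x j₀)) x
    have hmem₁ : t₁ ∈ bigS j₀ W := by
      rw [← hf₀]
      exact mem_bigS j₀ W (W.bases_sub β₁ hβ₁ (f₀ j₀)) f₀
    have hno := h2 _ hmem _ hmem₁
    intro j hj
    by_contra hne
    have : ⟪P j₀ (β (x j₀)) x, t₁⟫_ℂ = 0 := by
      rw [← hf₀]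
      exact inner_P_disagree j₀ hj hne
    exact hno this ⟨hcx, ht₁c⟩
  -- the induced colouring on the factor j₀
  refine W.uncol (fun v => c (P j₀ v f₀)) ?_ ?_
  · intro β hβ
    obtain ⟨t, ⟨htB, htc⟩, htu⟩ := h1 β hβ
    rw [Bβ, Finset.mem_image] at htB
    obtain ⟨x₀, _, hx₀⟩ := htB
    have hagree : ∀ j, j ≠ j₀ → x₀ j = f₀ j :=
      hcommon β hβ x₀ (by rw [hx₀]; exact htc)
    have hPt : P j₀ (β (x₀ j₀)) f₀ = t := by
      rw [← hx₀]
      exact (P_congr j₀ hagree).symm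
    refine ⟨x₀ j₀, show c (P j₀ (β (x₀ j₀)) f₀) by rw [hPt]; exact htc, ?_⟩
    intro k hk
    -- c (P j₀ (β k) f₀); this element lies in Bβ with index (update f₀ j₀ k)
    have hmemB : P j₀ (β k) f₀ ∈ Bβ j₀ β := by
      rw [Bβ, Finset.mem_image]
      refine ⟨Function.update f₀ j₀ k, Finset.mem_univ _, ?_⟩
      have h1' : Function.update f₀ j₀ k j₀ = k := Function.update_self j₀ k f₀
      rw [h1']
      exact P_congr j₀ (fun j hj => Function.update_of_ne hj k f₀)
    have heq : P j₀ (β k) f₀ = t := htu _ ⟨hmemB, hk⟩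
    -- conclude k = x₀ j₀ via inner products
    have hβk1 : ‖β k‖ = 1 := W.unit _ (W.bases_sub β hβ k)
    have hin : ⟪P j₀ (β k) f₀, P j₀ (β (x₀ j₀)) f₀⟫_ℂ = 1 := by
      rw [hPt, ← heq, inner_P_self_eq_one j₀ hβk1]
    rw [inner_P_agree j₀ (fun _ _ => rfl),
      orthonormal_iff_ite.mp (W.bases_on β hβ) k (x₀ j₀)] at hin
    by_contra hne
    rw [if_neg hne] at hin
    exact one_ne_zero hin.symm
  · intro v hv w hw hvw
    have h0 : ⟪P j₀ v f₀, P j₀ w f₀⟫_ℂ = 0 := by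
      rw [inner_P_agree j₀ (fun _ _ => rfl)]
      exact hvw
    exact h2 _ (mem_bigS j₀ W hv f₀) _ (mem_bigS j₀ W hw f₀) h0

end Main

end Tens

noncomputable def buildAux : (k : ℕ) → KSW (k + 3)
  | 0 => peresKSW
  | k+1 => Step.stepKSW (by omega) (buildAux k)

noncomputable def buildKSW (m : ℕ) (h : 3 ≤ m) : KSW m :=
  (Nat.sub_add_cancel h) ▸ buildAux (m - 3)

/-- unentangled KS sets given a subsystem of dimension ≥ 3: if every
factor has dimension at least `2` and some factor has dimension at least `3`, then there
is a finite set `S` of product unit vectors in `H₁ ⊗ ⋯ ⊗ Hₙ` admitting no KS-colouring;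
moreover already the direct product bases contained in `S` witness uncolourability. -/
theorem unentangled_KS_set_exists
    (n : ℕ) (hn : 1 ≤ n) (d : Fin n → ℕ)
    (hd2 : ∀ j, 2 ≤ d j) (hd3 : ∃ j, 3 ≤ d j) :
    ∃ S : Finset (EuclideanSpace ℂ ((j : Fin n) → Fin (d j))),
      (∀ v ∈ S, (∃ ψ, v = tensD ψ) ∧ ‖v‖ = 1) ∧
      (¬ ∃ c : EuclideanSpace ℂ ((j : Fin n) → Fin (d j)) → Prop,
        IsKSColouring (↑S) c) ∧
      (¬ ∃ c : EuclideanSpace ℂ ((j : Fin n) → Fin (d j)) → Prop,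
        (∀ B : Finset (EuclideanSpace ℂ ((j : Fin n) → Fin (d j))),
          ↑B ⊆ (S : Set (EuclideanSpace ℂ ((j : Fin n) → Fin (d j)))) →
          IsDirectProductBasis B → ∃! v, v ∈ B ∧ c v) ∧
        (∀ v ∈ S, ∀ w ∈ S, ⟪v, w⟫_ℂ = 0 → ¬(c v ∧ c w))) := by
  classical
  obtain ⟨j₀, hj₀⟩ := hd3
  set W : KSW (d j₀) := buildKSW (d j₀) hj₀ with hW
  refine ⟨Tens.bigS j₀ W, ?_, ?_, ?_⟩
  · intro v hv
    rw [Tens.bigS, Finset.mem_image] at hv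
    obtain ⟨p, hp, rfl⟩ := hv
    obtain ⟨hp1, _⟩ := Finset.mem_product.mp hp
    exact ⟨⟨_, rfl⟩, Tens.P_unit j₀ (W.unit _ hp1) p.2⟩
  · rintro ⟨c, hc1, hc2⟩
    refine Tens.tensor_uncol j₀ W c ?_ ?_
    · intro β hβ
      exact hc1 (Tens.Bβ j₀ β) (Tens.Bβ_sub j₀ W (W.bases_sub β hβ))
        (Tens.Bβ_isONB j₀ W hd2 (W.bases_on β hβ) (W.bases_sub β hβ))
    · intro v hv w hw hvw
      exact hc2 v (Finset.mem_coe.mpr hv) w (Finset.mem_coe.mpr hw) hvw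
  · rintro ⟨c, h1, h2⟩
    refine Tens.tensor_uncol j₀ W c ?_ ?_
    · intro β hβ
      exact h1 (Tens.Bβ j₀ β) (Tens.Bβ_sub j₀ W (W.bases_sub β hβ))
        (Tens.Bβ_isDPB j₀ (W.bases_on β hβ))
    · intro v hv w hw hvw
      exact h2 v hv w hw hvw


end
end

section
/- Gluing lemma for KS-uncolourable sets in ℂ⁴: let {e₁, e₂, e₃, e₄} be an orthonormal basis of a four-dimensional complex Hilbert space H. Let A be a finite set of unit vectors lying in the orthogonal complement of e₁, and B a finite set of unit vectors lying in the orthogonal complement of e₂, such that A admits no map c_A : A → {0,1} with exactly one element of c_A-value 1 in every orthonormal basis of e₁^⊥ contained in A, and similarly B admits no such map for orthonormal bases of e₂^⊥ contained in B. Then the set S = {e₁, e₂, e₃, e₄} ∪ A ∪ B admits no map c : S → {0,1} assigning exactly one value 1 to every orthonormal basis of H contained in S; i.e., S is a KS set in H. -/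
open scoped InnerProductSpace
open MeasureTheory

noncomputable section

lemma onbasis_of_card_four (T : Finset (EuclideanSpace ℂ (Fin 4)))
    (hT : Orthonormal ℂ (fun v : T => (v : EuclideanSpace ℂ (Fin 4))))
    (hcard : T.card = 4) : IsONBasis T := by
  refine ⟨hT, ?_⟩
  have hli := hT.linearIndependent
  have hcard' : Fintype.card T = Module.finrank ℂ (EuclideanSpace ℂ (Fin 4)) := by
    simp [hcard, finrank_euclideanSpace_fin]
  have := hli.span_eq_top_of_card_eq_finrank' hcard'
  simpa using this

/-- gluing lemma for KS-uncolourable sets in `ℂ⁴`: let `{e 0, …, e 3}` be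
an orthonormal basis of a four-dimensional Hilbert space, `A` a finite set of unit
vectors orthogonal to `e 0` and `B` a finite set of unit vectors orthogonal to `e 1`,
each admitting no `{0,1}`-colouring with exactly one value `1` on every orthonormal
basis of the respective orthogonal complement (a triple of orthonormal vectors)
contained in it.  Then `S = {e 0, e 1, e 2, e 3} ∪ A ∪ B` admits no `{0,1}`-colouring
with exactly one value `1` on every orthonormal basis of the whole space contained in
`S`; i.e. `S` is a KS set. -/
theorem gluing_KS_uncolourable
    (e : Fin 4 → EuclideanSpace ℂ (Fin 4)) (he : Orthonormal ℂ e)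
    (A B : Finset (EuclideanSpace ℂ (Fin 4)))
    (hA : ∀ a ∈ A, ‖a‖ = 1 ∧ ⟪e 0, a⟫_ℂ = 0)
    (hB : ∀ b ∈ B, ‖b‖ = 1 ∧ ⟪e 1, b⟫_ℂ = 0)
    (hAnc : ¬ ∃ cA : EuclideanSpace ℂ (Fin 4) → Prop,
      ∀ T : Finset (EuclideanSpace ℂ (Fin 4)), ↑T ⊆ (A : Set (EuclideanSpace ℂ (Fin 4))) →
        Orthonormal ℂ (fun v : T => (v : EuclideanSpace ℂ (Fin 4))) → T.card = 3 →
        ∃! v, v ∈ T ∧ cA v)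
    (hBnc : ¬ ∃ cB : EuclideanSpace ℂ (Fin 4) → Prop,
      ∀ T : Finset (EuclideanSpace ℂ (Fin 4)), ↑T ⊆ (B : Set (EuclideanSpace ℂ (Fin 4))) →
        Orthonormal ℂ (fun v : T => (v : EuclideanSpace ℂ (Fin 4))) → T.card = 3 →
        ∃! v, v ∈ T ∧ cB v)
    (S : Set (EuclideanSpace ℂ (Fin 4)))
    (hS : S = {e 0, e 1, e 2, e 3} ∪ ↑A ∪ ↑B) :
    ¬ ∃ c : EuclideanSpace ℂ (Fin 4) → Prop,
      ∀ T : Finset (EuclideanSpace ℂ (Fin 4)), ↑T ⊆ S → IsONBasis T →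
        ∃! v, v ∈ T ∧ c v := by
  classical
  rintro ⟨c, hc⟩
  have hite := orthonormal_iff_ite.mp he
  have heinj : Function.Injective e := he.linearIndependent.injective
  -- key: if c x is false and x unit vector in S orthogonal to all of F ⊆ S,
  -- then c is a good colouring of F on orthonormal triples
  have key : ∀ (x : EuclideanSpace ℂ (Fin 4)) (F : Finset (EuclideanSpace ℂ (Fin 4))),
      ‖x‖ = 1 → x ∈ S → (∀ a ∈ F, ‖a‖ = 1 ∧ ⟪x, a⟫_ℂ = 0) → (↑F ⊆ S) → ¬ c x →
      ∀ T : Finset (EuclideanSpace ℂ (Fin 4)), ↑T ⊆ (F : Set (EuclideanSpace ℂ (Fin 4))) →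
        Orthonormal ℂ (fun v : T => (v : EuclideanSpace ℂ (Fin 4))) → T.card = 3 →
        ∃! v, v ∈ T ∧ c v := by
    intro x F hx hxS hF hFS hcx T hTF hTo hTc
    have hmemF : ∀ v ∈ T, v ∈ F := fun v hv => by exact_mod_cast hTF hv
    have hxnT : x ∉ T := by
      intro hxT
      have h0 := (hF x (hmemF x hxT)).2
      rw [inner_self_eq_norm_sq_to_K x, hx] at h0
      norm_num at h0
    have hTite : ∀ v ∈ (T : Set (EuclideanSpace ℂ (Fin 4))),
        ∀ w ∈ (T : Set (EuclideanSpace ℂ (Fin 4))),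
        ⟪v, w⟫_ℂ = if v = w then 1 else 0 := orthonormal_subtype_iff_ite.mp hTo
    set T' : Finset (EuclideanSpace ℂ (Fin 4)) := insert x T with hT'def
    have hT'o : Orthonormal ℂ (fun v : T' => (v : EuclideanSpace ℂ (Fin 4))) := by
      rw [show ((fun v : T' => (v : EuclideanSpace ℂ (Fin 4)))) =
        (Subtype.val : ((T' : Set (EuclideanSpace ℂ (Fin 4))) : Type) → _) from rfl]
      rw [orthonormal_subtype_iff_ite]
      have hcl : ∀ v w : EuclideanSpace ℂ (Fin 4), (v = x ∨ v ∈ T) → (w = x ∨ w ∈ T) →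
          ⟪v, w⟫_ℂ = if v = w then 1 else 0 := by
        rintro v w (rfl | hv) (rfl | hw)
        · simp [inner_self_eq_norm_sq_to_K, hx]
        · have hne : v ≠ w := fun h => hxnT (h ▸ hw)
          rw [if_neg hne, (hF w (hmemF w hw)).2]
        · have hne : v ≠ w := fun h => hxnT (h ▸ hv)
          rw [if_neg hne, inner_eq_zero_symm.mp (hF v (hmemF v hv)).2]
        · exact hTite v hv w hw
      intro v hv w hw
      have hv1 : v ∈ T' := by exact_mod_cast hv
      have hw1 : w ∈ T' := by exact_mod_cast hw
      rw [hT'def, Finset.mem_insert] at hv1 hw1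
      exact hcl v w hv1 hw1
    have hT'card : T'.card = 4 := by
      rw [Finset.card_insert_of_notMem hxnT, hTc]
    have hT'S : (T' : Set (EuclideanSpace ℂ (Fin 4))) ⊆ S := by
      rw [hT'def, Finset.coe_insert]
      exact Set.insert_subset hxS (fun v hv => hFS (by exact_mod_cast hTF hv))
    obtain ⟨v, ⟨hvT', hcv⟩, huniq⟩ := hc T' hT'S (onbasis_of_card_four T' hT'o hT'card)
    have hvT : v ∈ T := by
      rcases Finset.mem_insert.mp hvT' with h | h
      · exact absurd (h ▸ hcv) hcx
      · exact h
    exact ⟨v, ⟨hvT, hcv⟩, fun w ⟨hwT, hcw⟩ =>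
      huniq w ⟨Finset.mem_insert_of_mem hwT, hcw⟩⟩
  have he0S : e 0 ∈ S := by rw [hS]; left; left; simp
  have he1S : e 1 ∈ S := by rw [hS]; left; left; simp
  have hAS : (A : Set (EuclideanSpace ℂ (Fin 4))) ⊆ S := by
    rw [hS]; intro v hv; left; right; exact hv
  have hBS : (B : Set (EuclideanSpace ℂ (Fin 4))) ⊆ S := by
    rw [hS]; intro v hv; right; exact hv
  have hc0 : c (e 0) := by
    by_contra h
    exact hAnc ⟨c, key (e 0) A (he.1 0) he0S hA hAS h⟩
  have hc1 : c (e 1) := by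
    by_contra h
    exact hBnc ⟨c, key (e 1) B (he.1 1) he1S hB hBS h⟩
  -- the basis {e 0, e 1, e 2, e 3} now has two coloured elements
  set T₀ : Finset (EuclideanSpace ℂ (Fin 4)) := Finset.image e Finset.univ with hT₀def
  have hmemT₀ : ∀ i, e i ∈ T₀ := fun i => Finset.mem_image_of_mem e (Finset.mem_univ i)
  have hT₀o : Orthonormal ℂ (fun v : T₀ => (v : EuclideanSpace ℂ (Fin 4))) := by
    rw [show ((fun v : T₀ => (v : EuclideanSpace ℂ (Fin 4)))) =
      (Subtype.val : ((T₀ : Set (EuclideanSpace ℂ (Fin 4))) : Type) → _) from rfl]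
    rw [orthonormal_subtype_iff_ite]
    intro v hv w hw
    simp only [hT₀def, Finset.coe_image, Finset.coe_univ, Set.image_univ,
      Set.mem_range] at hv hw
    obtain ⟨i, rfl⟩ := hv
    obtain ⟨j, rfl⟩ := hw
    rw [hite i j]
    by_cases h : i = j
    · simp [h]
    · rw [if_neg h, if_neg (fun hh => h (heinj hh))]
  have hT₀card : T₀.card = 4 := by
    rw [hT₀def, Finset.card_image_of_injective _ heinj]
    simp
  have hT₀S : (T₀ : Set (EuclideanSpace ℂ (Fin 4))) ⊆ S := by
    intro v hv
    simp only [hT₀def, Finset.coe_image, Finset.coe_univ, Set.image_univ,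
      Set.mem_range] at hv
    obtain ⟨i, rfl⟩ := hv
    rw [hS]
    left; left
    fin_cases i <;> simp
  obtain ⟨v, _, huniq⟩ := hc T₀ hT₀S (onbasis_of_card_four T₀ hT₀o hT₀card)
  have h0 := huniq (e 0) ⟨hmemT₀ 0, hc0⟩
  have h1 := huniq (e 1) ⟨hmemT₀ 1, hc1⟩
  have : e 0 = e 1 := h0.trans h1.symm
  have : (0 : Fin 4) = 1 := heinj this
  simp at this



end
end

section
/- Statistical proofs of the Kochen–Specker theorem with unentangled measurements imply Bell inequality violation: let ρ be a density operator on (ℂ²)^{⊗n} and let S be a finite set of product unit vectors in (ℂ²)^{⊗n}. Suppose the probabilistic model p(ψ) = ⟨ψ, ρψ⟩ on S is not classical, i.e., p is not a convex combination of maps c : S → {0,1} satisfying Σ_{ψ ∈ B} c(ψ) = 1 for every orthonormal basis B of (ℂ²)^{⊗n} contained in S. Then ρ violates a Bell inequality with local projective measurements: there exist, for each party r ∈ {1, …, n}, a finite family of orthonormal bases (B_r^{x})_{x ∈ X_r} of ℂ², with B_r^{x} = {φ^{r,x}_0, φ^{r,x}_1}, such that the behaviour p(a₁…aₙ | x₁…xₙ)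 = ⟨⊗_{r=1}^{n} φ^{r,x_r}_{a_r}, ρ (⊗_{r=1}^{n} φ^{r,x_r}_{a_r})⟩ (for aᵣ ∈ {0,1}, xᵣ ∈ X_r) does not lie in the convex hull of the local deterministic behaviours, i.e., of the behaviours of the form p(a₁…aₙ | x₁…xₙ) = ∏_{r=1}^{n} d_r(a_r | x_r) where each d_r(·|x) : {0,1} → {0,1} satisfies d_r(0|x) + d_r(1|x) = 1 for every x ∈ X_r. -/
open scoped InnerProductSpace
open MeasureTheory

noncomputable section

namespace KSBellAux

open Finset
open scoped Classical

lemma qubit_ext {x y : Qubit} (h0 : x 0 = y 0) (h1 : x 1 = y 1) : x = y := by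
  ext i
  fin_cases i <;> assumption

lemma qinner (x y : Qubit) :
    ⟪x, y⟫_ℂ = (starRingEnd ℂ) (x 0) * y 0 + (starRingEnd ℂ) (x 1) * y 1 := by
  simp [PiLp.inner_apply, RCLike.inner_apply, Fin.sum_univ_two, mul_comm]

/-- The canonical orthogonal companion of a qubit. -/
noncomputable def orthQ (u : Qubit) : Qubit :=
  WithLp.toLp 2 (fun i : Fin 2 => if i = 0 then -((starRingEnd ℂ) (u 1)) else (starRingEnd ℂ) (u 0))

@[simp] lemma orthQ_apply0 (u : Qubit) : orthQ u 0 = -((starRingEnd ℂ) (u 1)) := rfl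

@[simp] lemma orthQ_apply1 (u : Qubit) : orthQ u 1 = (starRingEnd ℂ) (u 0) := rfl

lemma inner_orthQ_right (u : Qubit) : ⟪u, orthQ u⟫_ℂ = 0 := by
  rw [qinner, orthQ_apply0, orthQ_apply1]
  ring

lemma inner_orthQ_self (u : Qubit) : ⟪orthQ u, orthQ u⟫_ℂ = ⟪u, u⟫_ℂ := by
  rw [qinner, qinner, orthQ_apply0, orthQ_apply1]
  simp only [map_neg, Complex.conj_conj]
  ring

lemma norm_orthQ (u : Qubit) : ‖orthQ u‖ = ‖u‖ := by
  have h := inner_orthQ_self u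
  rw [inner_self_eq_norm_sq_to_K, inner_self_eq_norm_sq_to_K] at h
  have h2 : ‖orthQ u‖ ^ 2 = ‖u‖ ^ 2 := by exact_mod_cast h
  nlinarith [norm_nonneg (orthQ u), norm_nonneg u]

lemma exists_smul_orthQ {b u : Qubit} (hb : b ≠ 0) (h : ⟪b, u⟫_ℂ = 0) :
    ∃ c : ℂ, u = c • orthQ b := by
  have h' : (starRingEnd ℂ) (b 0) * u 0 + (starRingEnd ℂ) (b 1) * u 1 = 0 := by
    rw [← qinner]; exact h
  by_cases h0 : b 0 = 0
  · have h1 : b 1 ≠ 0 := by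
      intro h1
      exact hb (qubit_ext (by simp [h0]) (by simp [h1]))
    have hcb : (starRingEnd ℂ) (b 1) ≠ 0 := by simpa using h1
    have hu1 : u 1 = 0 := by
      have h2 : (starRingEnd ℂ) (b 1) * u 1 = 0 := by
        rw [h0] at h'; simpa using h'
      rcases mul_eq_zero.mp h2 with h3 | h3
      · exact absurd h3 hcb
      · exact h3
    refine ⟨-(u 0) / (starRingEnd ℂ) (b 1), qubit_ext ?_ ?_⟩
    · rw [PiLp.smul_apply, orthQ_apply0, smul_eq_mul]
      field_simp
    · rw [PiLp.smul_apply, orthQ_apply1, smul_eq_mul, hu1, h0, map_zero, mul_zero]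
  · have hcb : (starRingEnd ℂ) (b 0) ≠ 0 := by simpa using h0
    refine ⟨u 1 / (starRingEnd ℂ) (b 0), qubit_ext ?_ ?_⟩
    · rw [PiLp.smul_apply, orthQ_apply0, smul_eq_mul]
      field_simp
      linear_combination h'
    · rw [PiLp.smul_apply, orthQ_apply1, smul_eq_mul]
      field_simp

/-- Proportional or orthogonal. -/
def QRel (u w : Qubit) : Prop := (∃ c : ℂ, w = c • u) ∨ ⟪u, w⟫_ℂ = 0

lemma qrel_refl (u : Qubit) : QRel u u := Or.inl ⟨1, (one_smul ℂ u).symm⟩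

lemma qrel_symm {u w : Qubit} (h : QRel u w) : QRel w u := by
  rcases h with ⟨c, rfl⟩ | h
  · by_cases hc : c = 0
    · right; simp [hc]
    · exact Or.inl ⟨c⁻¹, by rw [smul_smul, inv_mul_cancel₀ hc, one_smul]⟩
  · right; rw [← inner_conj_symm, h, map_zero]

lemma qrel_trans {u w z : Qubit} (hu : u ≠ 0) (hw : w ≠ 0) (hz : z ≠ 0)
    (h1 : QRel u w) (h2 : QRel w z) : QRel u z := by
  rcases h1 with ⟨c, rfl⟩ | h1
  · have hc : c ≠ 0 := fun h => hw (by simp [h])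
    rcases h2 with ⟨c', rfl⟩ | h2
    · exact Or.inl ⟨c' * c, by rw [mul_smul]⟩
    · right
      rw [inner_smul_left] at h2
      rcases mul_eq_zero.mp h2 with h3 | h3
      · exact absurd h3 (by simpa using hc)
      · exact h3
  · rcases h2 with ⟨c', rfl⟩ | h2
    · right; rw [inner_smul_right, h1, mul_zero]
    · obtain ⟨a, ha⟩ := exists_smul_orthQ hw (by rw [← inner_conj_symm, h1, map_zero])
      obtain ⟨a', ha'⟩ := exists_smul_orthQ hw h2
      have ha0 : a ≠ 0 := fun h => hu (by rw [ha, h, zero_smul])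
      left
      refine ⟨a' * a⁻¹, ?_⟩
      rw [ha, ha', smul_smul, mul_assoc, inv_mul_cancel₀ ha0, mul_one]

lemma inner_tens {n : ℕ} (ψ χ : Fin n → Qubit) :
    ⟪tens ψ, tens χ⟫_ℂ = ∏ j, ⟪ψ j, χ j⟫_ℂ := by
  have hR : ∀ j, ⟪ψ j, χ j⟫_ℂ = ∑ a : Fin 2, (starRingEnd ℂ) (ψ j a) * χ j a := by
    intro j
    simp [PiLp.inner_apply, RCLike.inner_apply, mul_comm]
  calc ⟪tens ψ, tens χ⟫_ℂ
      = ∑ f : Fin n → Fin 2, (starRingEnd ℂ) (tens ψ f) * tens χ f := by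
        simp [PiLp.inner_apply, RCLike.inner_apply, mul_comm]
    _ = ∑ f : Fin n → Fin 2, ∏ j, (starRingEnd ℂ) (ψ j (f j)) * χ j (f j) := by
        refine Finset.sum_congr rfl fun f _ => ?_
        show (starRingEnd ℂ) (∏ j, ψ j (f j)) * ∏ j, χ j (f j) = _
        rw [map_prod, ← Finset.prod_mul_distrib]
    _ = ∏ j, ∑ a : Fin 2, (starRingEnd ℂ) (ψ j a) * χ j a :=
        (Fintype.prod_sum fun j a => (starRingEnd ℂ) (ψ j a) * χ j a).symm
    _ = ∏ j, ⟪ψ j, χ j⟫_ℂ := by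
        exact Finset.prod_congr rfl fun j _ => (hR j).symm

lemma tens_smul {n : ℕ} (c : Fin n → ℂ) (ψ : Fin n → Qubit) :
    tens (fun j => c j • ψ j) = (∏ j, c j) • tens ψ := by
  ext f
  show (∏ j, (c j • ψ j) (f j)) = (∏ j, c j) * ∏ j, ψ j (f j)
  rw [← Finset.prod_mul_distrib]
  exact Finset.prod_congr rfl fun j _ => rfl

lemma tens_eq_zero {n : ℕ} {ψ : Fin n → Qubit} {r : Fin n} (h : ψ r = 0) : tens ψ = 0 := by
  ext f
  show (∏ j, ψ j (f j)) = 0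
  exact Finset.prod_eq_zero (Finset.mem_univ r) (by rw [h]; rfl)

lemma min'_congr {α : Type*} [LinearOrder α] {s t : Finset α} (h : s = t)
    (hs : s.Nonempty) (ht : t.Nonempty) : s.min' hs = t.min' ht := by
  subst h; rfl

lemma trace_eq_sum_ONB {n : ℕ} (ρ : NQubit n →ₗ[ℂ] NQubit n) {B : Finset (NQubit n)}
    (hB : IsONBasis B) : LinearMap.trace ℂ (NQubit n) ρ = ∑ v ∈ B, ⟪v, ρ v⟫_ℂ := by
  have hspan : ⊤ ≤ Submodule.span ℂ (Set.range fun v : B => (v : NQubit n)) := by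
    rw [Subtype.range_coe_subtype]
    exact hB.2.ge
  rw [LinearMap.trace_eq_matrix_trace ℂ (OrthonormalBasis.mk hB.1 hspan).toBasis, Matrix.trace,
    ← Finset.sum_coe_sort B (fun v => ⟪v, ρ v⟫_ℂ)]
  refine Finset.sum_congr rfl fun i _ => ?_
  rw [Matrix.diag_apply, LinearMap.toMatrix_apply, OrthonormalBasis.coe_toBasis,
    OrthonormalBasis.coe_toBasis_repr_apply, OrthonormalBasis.repr_apply_apply,
    OrthonormalBasis.coe_mk]

lemma prod_zero_one {n : ℕ} (g : Fin n → ℝ) (h : ∀ r, g r = 0 ∨ g r = 1) :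
    (∏ r, g r) = 0 ∨ (∏ r, g r) = 1 := by
  by_cases hz : ∃ r, g r = 0
  · exact Or.inl (Finset.prod_eq_zero (Finset.mem_univ hz.choose) hz.choose_spec)
  · push_neg at hz
    exact Or.inr (Finset.prod_eq_one fun r _ => (h r).resolve_left (hz r))

lemma sum_le_one_of_pairwise {α : Type*} (B : Finset α) (c : α → ℝ)
    (h01 : ∀ v ∈ B, c v = 0 ∨ c v = 1)
    (hp : ∀ v ∈ B, ∀ u ∈ B, v ≠ u → c v * c u = 0) :
    ∑ v ∈ B, c v ≤ 1 := by
  by_cases hex : ∃ v ∈ B, c v = 1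
  · obtain ⟨v₀, hv₀, hc⟩ := hex
    have hs : ∑ v ∈ B, c v = c v₀ := by
      apply Finset.sum_eq_single_of_mem v₀ hv₀
      intro u hu hne
      rcases h01 u hu with h | h
      · exact h
      · have h2 := hp u hu v₀ hv₀ hne
        rw [h, hc, one_mul] at h2
        exact absurd h2 one_ne_zero
    rw [hs, hc]
  · push_neg at hex
    have hz : ∑ v ∈ B, c v = 0 :=
      Finset.sum_eq_zero fun v hv => (h01 v hv).resolve_right (hex v hv)
    rw [hz]; norm_num

variable {n m : ℕ}

/-- Canonical representative of the basis-class of the `r`-th factor of the `s`-th vector. -/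
noncomputable def clsF (ψ : Fin m → Fin n → Qubit) (r : Fin n) (s : Fin m) : Fin m :=
  (Finset.univ.filter (fun t => QRel (ψ s r) (ψ t r))).min'
    ⟨s, Finset.mem_filter.mpr ⟨Finset.mem_univ s, qrel_refl _⟩⟩

/-- Position of the `r`-th factor of the `s`-th vector inside its canonical basis. -/
noncomputable def posF (ψ : Fin m → Fin n → Qubit) (r : Fin n) (s : Fin m) : Fin 2 :=
  if ∃ c : ℂ, ψ s r = c • ψ (clsF ψ r s) r then 0 else 1

noncomputable def nrmF (ψ : Fin m → Fin n → Qubit) (x : Fin m) (r : Fin n) : Qubit :=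
  ((‖ψ x r‖⁻¹ : ℝ) : ℂ) • ψ x r

/-- The measurement bases handed to each party. -/
noncomputable def phiF (ψ : Fin m → Fin n → Qubit) (r : Fin n) (x : Fin m) (a : Fin 2) : Qubit :=
  if a = 0 then nrmF ψ x r else orthQ (nrmF ψ x r)

lemma phiF_zero (ψ : Fin m → Fin n → Qubit) (r : Fin n) (x : Fin m) :
    phiF ψ r x 0 = nrmF ψ x r := if_pos rfl

lemma phiF_one (ψ : Fin m → Fin n → Qubit) (r : Fin n) (x : Fin m) :
    phiF ψ r x 1 = orthQ (nrmF ψ x r) := if_neg (by decide)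

lemma fin2_zero_or_one : ∀ a : Fin 2, a = 0 ∨ a = 1 := by decide

lemma nrmF_norm {ψ : Fin m → Fin n → Qubit} {x : Fin m} {r : Fin n} (h : ψ x r ≠ 0) :
    ‖nrmF ψ x r‖ = 1 := by
  have hne : ‖ψ x r‖ ≠ 0 := norm_ne_zero_iff.mpr h
  rw [nrmF, norm_smul, Complex.norm_real, Real.norm_eq_abs, abs_inv, abs_norm,
    inv_mul_cancel₀ hne]

lemma nrmF_ne_zero {ψ : Fin m → Fin n → Qubit} {x : Fin m} {r : Fin n} (h : ψ x r ≠ 0) :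
    nrmF ψ x r ≠ 0 := by
  intro h0
  have := nrmF_norm h
  rw [h0, norm_zero] at this
  exact zero_ne_one this

lemma phiF_norm {ψ : Fin m → Fin n → Qubit} {x : Fin m} {r : Fin n} (h : ψ x r ≠ 0)
    (a : Fin 2) : ‖phiF ψ r x a‖ = 1 := by
  rcases fin2_zero_or_one a with ha | ha
  · rw [ha, phiF_zero]; exact nrmF_norm h
  · rw [ha, phiF_one, norm_orthQ]; exact nrmF_norm h

lemma phiF_orth (ψ : Fin m → Fin n → Qubit) (r : Fin n) (x : Fin m) :
    ⟪phiF ψ r x 0, phiF ψ r x 1⟫_ℂ = 0 := by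
  rw [phiF_zero, phiF_one]
  exact inner_orthQ_right _

lemma clsF_rel (ψ : Fin m → Fin n → Qubit) (r : Fin n) (s : Fin m) :
    QRel (ψ s r) (ψ (clsF ψ r s) r) := by
  have h := Finset.min'_mem (Finset.univ.filter (fun t => QRel (ψ s r) (ψ t r)))
    ⟨s, Finset.mem_filter.mpr ⟨Finset.mem_univ s, qrel_refl _⟩⟩
  exact (Finset.mem_filter.mp h).2

lemma clsF_congr {ψ : Fin m → Fin n → Qubit} (hnz : ∀ s r, ψ s r ≠ 0) {r : Fin n}
    {s s' : Fin m} (h : ⟪ψ s r, ψ s' r⟫_ℂ = 0) : clsF ψ r s = clsF ψ r s' := by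
  have hss' : QRel (ψ s r) (ψ s' r) := Or.inr h
  have hset : Finset.univ.filter (fun t => QRel (ψ s r) (ψ t r))
      = Finset.univ.filter (fun t => QRel (ψ s' r) (ψ t r)) := by
    ext t
    simp only [Finset.mem_filter, Finset.mem_univ, true_and]
    exact ⟨fun ht => qrel_trans (hnz s' r) (hnz s r) (hnz t r) (qrel_symm hss') ht,
           fun ht => qrel_trans (hnz s r) (hnz s' r) (hnz t r) hss' ht⟩
  exact min'_congr hset _ _

/-- The chosen measurement vector indexed by the class/position of `ψ s r` is a nonzero
multiple of `ψ s r`. -/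
lemma phiF_smul {ψ : Fin m → Fin n → Qubit} (hnz : ∀ s r, ψ s r ≠ 0) (s : Fin m) (r : Fin n) :
    ∃ b : ℂ, b ≠ 0 ∧ phiF ψ r (clsF ψ r s) (posF ψ r s) = b • ψ s r := by
  by_cases hp : ∃ c : ℂ, ψ s r = c • ψ (clsF ψ r s) r
  · obtain ⟨c, hc⟩ := hp
    have hc0 : c ≠ 0 := fun h => hnz s r (by rw [hc, h, zero_smul])
    have hpos : posF ψ r s = 0 := if_pos ⟨c, hc⟩
    refine ⟨((‖ψ (clsF ψ r s) r‖⁻¹ : ℝ) : ℂ) * c⁻¹, ?_, ?_⟩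
    · apply mul_ne_zero
      · simpa using hnz (clsF ψ r s) r
      · exact inv_ne_zero hc0
    · rw [hpos, phiF_zero]
      have hX : ψ (clsF ψ r s) r = c⁻¹ • ψ s r := by
        rw [hc, smul_smul, inv_mul_cancel₀ hc0, one_smul]
      rw [nrmF, hX, smul_smul]
  · have hpos : posF ψ r s = 1 := if_neg hp
    have horth : ⟪ψ s r, ψ (clsF ψ r s) r⟫_ℂ = 0 := by
      rcases clsF_rel ψ r s with ⟨c, hc⟩ | h
      · exfalso
        apply hp
        have hc0 : c ≠ 0 := fun h => hnz (clsF ψ r s) r (by rw [hc, h, zero_smul])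
        exact ⟨c⁻¹, by rw [hc, smul_smul, inv_mul_cancel₀ hc0, one_smul]⟩
      · exact h
    have h2 : ⟪nrmF ψ (clsF ψ r s) r, ψ s r⟫_ℂ = 0 := by
      rw [nrmF, inner_smul_left]
      rw [show ⟪ψ (clsF ψ r s) r, ψ s r⟫_ℂ = 0 from by
        rw [← inner_conj_symm, horth, map_zero]]
      rw [mul_zero]
    obtain ⟨a, ha⟩ := exists_smul_orthQ (nrmF_ne_zero (hnz (clsF ψ r s) r)) h2
    have ha0 : a ≠ 0 := fun h => hnz s r (by rw [ha, h, zero_smul])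
    refine ⟨a⁻¹, inv_ne_zero ha0, ?_⟩
    rw [hpos, phiF_one, ha, smul_smul, inv_mul_cancel₀ ha0, one_smul]

lemma fin2_cases : ∀ {a b : Fin 2}, a ≠ b → (a = 0 ∧ b = 1) ∨ (a = 1 ∧ b = 0) := by
  decide

end KSBellAux

/-- statistical KS proofs with unentangled measurements imply Bell
violation: let `ρ` be a density operator on `(ℂ²)^{⊗n}` (self-adjoint, positive
semidefinite, trace one) and `S` a finite set of product unit vectors such that the
probabilistic model `ψ ↦ ⟨ψ, ρ ψ⟩` on `S` is not a convex combination of `{0,1}`-valued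
maps summing to `1` on every orthonormal basis contained in `S`.  Then `ρ` violates a
Bell inequality with local projective measurements: there are finitely many single-qubit
orthonormal-basis measurements `φ r x` for each party `r` such that the behaviour
`p(a|x) = ⟨⊗ᵣ φ r (x r) (a r), ρ (⊗ᵣ φ r (x r) (a r))⟩` is not in the convex hull of the
local deterministic behaviours. -/
theorem statistical_KS_implies_Bell_violation
    (n : ℕ) (ρ : NQubit n →ₗ[ℂ] NQubit n)
    (hsym : ∀ x y : NQubit n, ⟪ρ x, y⟫_ℂ = ⟪x, ρ y⟫_ℂ)
    (hpos : ∀ x : NQubit n, 0 ≤ (⟪x, ρ x⟫_ℂ).re)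
    (htr : LinearMap.trace ℂ (NQubit n) ρ = 1)
    (S : Finset (NQubit n)) (hS : ∀ v ∈ S, IsProduct v ∧ ‖v‖ = 1)
    (hnc : ¬ ∃ (k : ℕ) (w : Fin k → ℝ) (c : Fin k → NQubit n → ℝ),
      (∀ i, 0 ≤ w i) ∧ (∑ i, w i = 1) ∧
      (∀ i v, c i v = 0 ∨ c i v = 1) ∧
      (∀ i, ∀ B : Finset (NQubit n), ↑B ⊆ (S : Set (NQubit n)) → IsONBasis B →
        ∑ v ∈ B, c i v = 1) ∧
      (∀ v ∈ S, (⟪v, ρ v⟫_ℂ).re = ∑ i, w i * c i v)) :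
    ∃ (X : Fin n → ℕ) (φ : (r : Fin n) → Fin (X r) → Fin 2 → Qubit),
      (∀ r x, ‖φ r x 0‖ = 1 ∧ ‖φ r x 1‖ = 1 ∧ ⟪φ r x 0, φ r x 1⟫_ℂ = 0) ∧
      ¬ ∃ (k : ℕ) (w : Fin k → ℝ)
          (d : Fin k → (r : Fin n) → Fin (X r) → Fin 2 → ℝ),
        (∀ i, 0 ≤ w i) ∧ (∑ i, w i = 1) ∧
        (∀ i r x a, d i r x a = 0 ∨ d i r x a = 1) ∧
        (∀ i r x, d i r x 0 + d i r x 1 = 1) ∧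
        (∀ (a : Fin n → Fin 2) (x : (r : Fin n) → Fin (X r)),
          (⟪tens (fun r => φ r (x r) (a r)), ρ (tens (fun r => φ r (x r) (a r)))⟫_ℂ).re
            = ∑ i, w i * ∏ r, d i r (x r) (a r)) := by
  classical
  have hnontriv : (0 : NQubit n) ≠ (WithLp.toLp 2 (fun _ => 1) : NQubit n) := by
    intro h
    have := congrArg (fun v : NQubit n => v.ofLp (fun _ => 0)) h
    simpa using this
  let e : {x // x ∈ S} ≃ Fin S.card := S.equivFin
  let σ : Fin S.card → NQubit n := fun s => ((e.symm s : {x // x ∈ S}) : NQubit n)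
  have hσS : ∀ s, σ s ∈ S := fun s => (e.symm s).2
  have hσe : ∀ (v : NQubit n) (h : v ∈ S), σ (e ⟨v, h⟩) = v := by
    intro v h
    exact congrArg Subtype.val (e.symm_apply_apply ⟨v, h⟩)
  have hσnorm : ∀ s, ‖σ s‖ = 1 := fun s => (hS _ (hσS s)).2
  have hfac : ∀ s, ∃ ψ : Fin n → Qubit, σ s = tens ψ := fun s => (hS _ (hσS s)).1
  choose ψ hψ using hfac
  have hnz : ∀ s r, ψ s r ≠ 0 := by
    intro s r h
    have h0 : σ s = 0 := by rw [hψ s]; exact KSBellAux.tens_eq_zero h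
    have := hσnorm s
    rw [h0, norm_zero] at this
    exact zero_ne_one this
  refine ⟨fun _ => S.card, fun r x a => KSBellAux.phiF ψ r x a, ?_, ?_⟩
  · intro r x
    exact ⟨KSBellAux.phiF_norm (hnz x r) 0, KSBellAux.phiF_norm (hnz x r) 1,
      KSBellAux.phiF_orth ψ r x⟩
  rintro ⟨k, w, d, hw0, hw1, hd01, hdsum, hbeh⟩
  -- quantum probabilities at the designated settings
  have hQ : ∀ s, (⟪σ s, ρ (σ s)⟫_ℂ).re
      = ∑ i, w i * ∏ r, d i r (KSBellAux.clsF ψ r s) (KSBellAux.posF ψ r s) := by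
    intro s
    choose b hb0 hbφ using KSBellAux.phiF_smul hnz s
    have ht : tens (fun r => KSBellAux.phiF ψ r (KSBellAux.clsF ψ r s) (KSBellAux.posF ψ r s))
        = (∏ r, b r) • tens (ψ s) := by
      rw [show (fun r => KSBellAux.phiF ψ r (KSBellAux.clsF ψ r s) (KSBellAux.posF ψ r s))
          = fun r => b r • ψ s r from funext hbφ]
      exact KSBellAux.tens_smul b (ψ s)
    have hββ : (starRingEnd ℂ) (∏ r, b r) * (∏ r, b r) = 1 := by
      have h1 : ⟪tens (fun r => KSBellAux.phiF ψ r (KSBellAux.clsF ψ r s) (KSBellAux.posF ψ r s)),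
          tens (fun r => KSBellAux.phiF ψ r (KSBellAux.clsF ψ r s) (KSBellAux.posF ψ r s))⟫_ℂ
          = 1 := by
        rw [KSBellAux.inner_tens]
        apply Finset.prod_eq_one
        intro r _
        rw [inner_self_eq_norm_sq_to_K, KSBellAux.phiF_norm (hnz (KSBellAux.clsF ψ r s) r)]
        norm_num
      rw [ht, ← hψ s, inner_smul_left, inner_smul_right, inner_self_eq_norm_sq_to_K,
        hσnorm s] at h1
      simpa [mul_assoc] using h1
    have hiq : ⟪tens (fun r => KSBellAux.phiF ψ r (KSBellAux.clsF ψ r s) (KSBellAux.posF ψ r s)),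
        ρ (tens (fun r => KSBellAux.phiF ψ r (KSBellAux.clsF ψ r s) (KSBellAux.posF ψ r s)))⟫_ℂ
        = ⟪σ s, ρ (σ s)⟫_ℂ := by
      rw [ht, ← hψ s, LinearMap.map_smul, inner_smul_left, inner_smul_right, ← mul_assoc, hββ, one_mul]
    rw [← hiq]
    exact hbeh (fun r => KSBellAux.posF ψ r s) (fun r => KSBellAux.clsF ψ r s)
  -- the induced colourings
  let cG : Fin k → NQubit n → ℝ := fun i v =>
    if h : v ∈ S then
      ∏ r, d i r (KSBellAux.clsF ψ r (e ⟨v, h⟩)) (KSBellAux.posF ψ r (e ⟨v, h⟩))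
    else 0
  have hcGS : ∀ i (v : NQubit n) (h : v ∈ S),
      cG i v = ∏ r, d i r (KSBellAux.clsF ψ r (e ⟨v, h⟩)) (KSBellAux.posF ψ r (e ⟨v, h⟩)) :=
    fun i v h => dif_pos h
  have hcGσ : ∀ i s, cG i (σ s) = ∏ r, d i r (KSBellAux.clsF ψ r s) (KSBellAux.posF ψ r s) := by
    intro i s
    rw [hcGS i (σ s) (hσS s)]
    have h2 : e ⟨σ s, hσS s⟩ = s := by
      have h3 : (⟨σ s, hσS s⟩ : {x // x ∈ S}) = e.symm s := Subtype.ext rfl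
      rw [h3, Equiv.apply_symm_apply]
    rw [h2]
  have hcG01 : ∀ i v, cG i v = 0 ∨ cG i v = 1 := by
    intro i v
    by_cases h : v ∈ S
    · rw [hcGS i v h]
      exact KSBellAux.prod_zero_one _ (fun r => hd01 i r _ _)
    · left; exact dif_neg h
  have hmatch : ∀ v ∈ S, (⟪v, ρ v⟫_ℂ).re = ∑ i, w i * cG i v := by
    intro v hv
    have h := hQ (e ⟨v, hv⟩)
    rw [hσe v hv] at h
    rw [h]
    exact Finset.sum_congr rfl fun i _ => by rw [hcGS i v hv]
  -- no two orthogonal vectors of S are both selected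
  have hpair : ∀ i s s', ⟪σ s, σ s'⟫_ℂ = 0 → cG i (σ s) * cG i (σ s') = 0 := by
    intro i s s' h
    rw [hψ s, hψ s', KSBellAux.inner_tens] at h
    obtain ⟨r₀, -, hr₀⟩ := Finset.prod_eq_zero_iff.mp h
    have hceq : KSBellAux.clsF ψ r₀ s = KSBellAux.clsF ψ r₀ s' := KSBellAux.clsF_congr hnz hr₀
    obtain ⟨b, hb0, hbφ⟩ := KSBellAux.phiF_smul hnz s r₀
    obtain ⟨b', hb0', hbφ'⟩ := KSBellAux.phiF_smul hnz s' r₀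
    have hppos : KSBellAux.posF ψ r₀ s ≠ KSBellAux.posF ψ r₀ s' := by
      intro hpp
      have h1 : ⟪KSBellAux.phiF ψ r₀ (KSBellAux.clsF ψ r₀ s) (KSBellAux.posF ψ r₀ s),
          KSBellAux.phiF ψ r₀ (KSBellAux.clsF ψ r₀ s') (KSBellAux.posF ψ r₀ s')⟫_ℂ = 0 := by
        rw [hbφ, hbφ', inner_smul_left, inner_smul_right, hr₀, mul_zero, mul_zero]
      rw [hceq, hpp] at h1
      have h2 : ⟪KSBellAux.phiF ψ r₀ (KSBellAux.clsF ψ r₀ s') (KSBellAux.posF ψ r₀ s'),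
          KSBellAux.phiF ψ r₀ (KSBellAux.clsF ψ r₀ s') (KSBellAux.posF ψ r₀ s')⟫_ℂ = 1 := by
        rw [inner_self_eq_norm_sq_to_K,
          KSBellAux.phiF_norm (hnz (KSBellAux.clsF ψ r₀ s') r₀)]
        norm_num
      rw [h1] at h2
      exact zero_ne_one h2
    rw [hcGσ, hcGσ, ← Finset.prod_mul_distrib]
    apply Finset.prod_eq_zero (Finset.mem_univ r₀)
    rw [hceq]
    have hsum := hdsum i r₀ (KSBellAux.clsF ψ r₀ s')
    rcases hd01 i r₀ (KSBellAux.clsF ψ r₀ s') (KSBellAux.posF ψ r₀ s) with h1 | h1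
    · rw [h1, zero_mul]
    · rcases hd01 i r₀ (KSBellAux.clsF ψ r₀ s') (KSBellAux.posF ψ r₀ s') with h2 | h2
      · rw [h2, mul_zero]
      · exfalso
        rcases KSBellAux.fin2_cases hppos with ⟨ha, hb⟩ | ⟨ha, hb⟩ <;>
          rw [ha] at h1 <;> rw [hb] at h2 <;> linarith
  -- every ONB inside S receives total weight one for every relevant colouring
  have hB1 : ∀ B : Finset (NQubit n), ↑B ⊆ (S : Set (NQubit n)) → IsONBasis B →
      ∀ j, w j ≠ 0 → ∑ v ∈ B, cG j v = 1 := by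
    intro B hBsub hBON
    have hBS : ∀ v ∈ B, v ∈ S := fun v hv => Finset.mem_coe.mp (hBsub (Finset.mem_coe.mpr hv))
    have hle : ∀ i, ∑ v ∈ B, cG i v ≤ 1 := by
      intro i
      apply KSBellAux.sum_le_one_of_pairwise
      · exact fun v _ => hcG01 i v
      · intro v hv u hu hne
        have hvS := hBS v hv
        have huS := hBS u hu
        have horth : ⟪v, u⟫_ℂ = 0 := by
          have h2 : ⟪v, u⟫_ℂ = if (⟨v, hv⟩ : {x // x ∈ B}) = ⟨u, hu⟩ then (1 : ℂ) else 0 :=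
            orthonormal_iff_ite.mp hBON.1 ⟨v, hv⟩ ⟨u, hu⟩
          rw [if_neg (fun hh => hne (congrArg Subtype.val hh))] at h2
          exact h2
        have h3 := hpair i (e ⟨v, hvS⟩) (e ⟨u, huS⟩)
          (by rw [hσe v hvS, hσe u huS]; exact horth)
        rw [hσe v hvS, hσe u huS] at h3
        exact h3
    have htr1 : ∑ v ∈ B, (⟪v, ρ v⟫_ℂ).re = 1 := by
      rw [← Complex.re_sum, ← KSBellAux.trace_eq_sum_ONB ρ hBON, htr, Complex.one_re]
    have hsum2 : ∑ i, w i * (∑ v ∈ B, cG i v) = 1 := by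
      calc ∑ i, w i * ∑ v ∈ B, cG i v
          = ∑ i, ∑ v ∈ B, w i * cG i v := by
            exact Finset.sum_congr rfl fun i _ => Finset.mul_sum _ _ _
        _ = ∑ v ∈ B, ∑ i, w i * cG i v := Finset.sum_comm
        _ = ∑ v ∈ B, (⟪v, ρ v⟫_ℂ).re :=
            Finset.sum_congr rfl fun v hv => (hmatch v (hBS v hv)).symm
        _ = 1 := htr1
    intro j hj
    by_contra hne
    have hzero : ∑ i, w i * (1 - ∑ v ∈ B, cG i v) = 0 := by
      simp only [mul_sub, mul_one]
      rw [Finset.sum_sub_distrib, hw1, hsum2, sub_self]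
    have hnonneg : ∀ i ∈ Finset.univ, (0 : ℝ) ≤ w i * (1 - ∑ v ∈ B, cG i v) :=
      fun i _ => mul_nonneg (hw0 i) (by linarith [hle i])
    have hz := (Finset.sum_eq_zero_iff_of_nonneg hnonneg).mp hzero j (Finset.mem_univ j)
    rcases mul_eq_zero.mp hz with h | h
    · exact hj h
    · exact hne (by linarith [hle j])
  have hex : ∃ i, w i ≠ 0 := by
    by_contra h
    push_neg at h
    rw [Finset.sum_eq_zero (fun i _ => h i)] at hw1
    exact zero_ne_one hw1
  obtain ⟨i₀, hi₀⟩ := hex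
  apply hnc
  refine ⟨k, w, fun i => cG (if w i = 0 then i₀ else i), hw0, hw1, ?_, ?_, ?_⟩
  · intro i v
    exact hcG01 _ v
  · intro i B hBsub hBON
    apply hB1 B hBsub hBON
    split_ifs with h
    · exact hi₀
    · exact h
  · intro v hv
    rw [hmatch v hv]
    refine Finset.sum_congr rfl fun i _ => ?_
    show w i * cG i v = w i * cG (if w i = 0 then i₀ else i) v
    by_cases h : w i = 0
    · rw [h, zero_mul, zero_mul]
    · rw [if_neg h]

end
end
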